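/- arXiv:2008.09231 — 9 statements merged into one kernel-verified Lean document; each statement's English description precedes it below -/
import Mathlib

section
/- Persistence Lemma: In every DIBI model, i.e., a DIBI frame (X, ⊑, ⊕, ⊙, E) together with a persistent valuation V, for every DIBI formula P and all states x, y ∈ X, if x ⊨ P and x ⊑ y, then y ⊨ P. -/
/-- A DIBI frame: a preorder `le` on `X`, non-deterministic binary operations
`oplus` and `odot`, and a set of units `E`, satisfying the twelve DIBI frame conditions. -/
structure IsDIBIFrame {X : Type*} (le : X → X → Prop) (oplus odot : X → X → Set X)
    (E : Set X) : Prop where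
  le_refl : ∀ x, le x x
  le_trans : ∀ x y z, le x y → le y z → le x z
  oplus_down : ∀ x y z x' y', z ∈ oplus x y → le x' x → le y' y →
    ∃ z', le z' z ∧ z' ∈ oplus x' y'
  odot_up : ∀ x y z z', z ∈ odot x y → le z z' →
    ∃ x' y', le x x' ∧ le y y' ∧ z' ∈ odot x' y'
  oplus_comm : ∀ x y z, z ∈ oplus x y → z ∈ oplus y x
  oplus_assoc : ∀ x y z t w, w ∈ oplus t z → t ∈ oplus x y →
    ∃ s, s ∈ oplus y z ∧ w ∈ oplus x s
  oplus_unit_exists : ∀ x, ∃ e ∈ E, x ∈ oplus e x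
  oplus_unit_coherence : ∀ e x y, e ∈ E → x ∈ oplus y e → le y x
  odot_assoc : ∀ x y z w, (∃ t, w ∈ odot t z ∧ t ∈ odot x y) ↔
    (∃ s, s ∈ odot y z ∧ w ∈ odot x s)
  odot_unit_exists_left : ∀ x, ∃ e ∈ E, x ∈ odot e x
  odot_unit_exists_right : ∀ x, ∃ e ∈ E, x ∈ odot x e
  odot_coherence_right : ∀ e x y, e ∈ E → x ∈ odot y e → le y x
  unit_closure : ∀ e e', e ∈ E → le e e' → e' ∈ E
  rev_exchange : ∀ x y z y1 y2 z1 z2, x ∈ oplus y z → y ∈ odot y1 y2 → z ∈ odot z1 z2 →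
    ∃ u v, u ∈ oplus y1 z1 ∧ v ∈ oplus y2 z2 ∧ x ∈ odot u v
/-- Formulas of the logic DIBI. -/
inductive Formula (AP : Type*) : Type _ where
  | atom : AP → Formula AP
  | top : Formula AP
  | bot : Formula AP
  | emp : Formula AP            -- the multiplicative unit I
  | and : Formula AP → Formula AP → Formula AP
  | or : Formula AP → Formula AP → Formula AP
  | imp : Formula AP → Formula AP → Formula AP
  | sep : Formula AP → Formula AP → Formula AP      -- P ∗ Q
  | wand : Formula AP → Formula AP → Formula AP     -- P -∗ Q
  | tri : Formula AP → Formula AP → Formula AP      -- P ▷ Q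
  | triimpR : Formula AP → Formula AP → Formula AP  -- P ▷→ Q
  | triimpL : Formula AP → Formula AP → Formula AP  -- P ▷- Q
/-- Kripke satisfaction for DIBI formulas in a DIBI frame with valuation `V`. -/
def Sat {X AP : Type*} (le : X → X → Prop) (oplus odot : X → X → Set X) (E : Set X)
    (V : AP → Set X) : Formula AP → X → Prop
  | .atom p, x => x ∈ V p
  | .top, _ => True
  | .bot, _ => False
  | .emp, x => x ∈ E
  | .and P Q, x => Sat le oplus odot E V P x ∧ Sat le oplus odot E V Q x
  | .or P Q, x => Sat le oplus odot E V P x ∨ Sat le oplus odot E V Q x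
  | .imp P Q, x => ∀ y, le x y → Sat le oplus odot E V P y → Sat le oplus odot E V Q y
  | .sep P Q, x => ∃ x' y z, le x' x ∧ x' ∈ oplus y z ∧
      Sat le oplus odot E V P y ∧ Sat le oplus odot E V Q z
  | .wand P Q, x => ∀ y z, z ∈ oplus x y →
      Sat le oplus odot E V P y → Sat le oplus odot E V Q z
  | .tri P Q, x => ∃ y z, x ∈ odot y z ∧
      Sat le oplus odot E V P y ∧ Sat le oplus odot E V Q z
  | .triimpR P Q, x => ∀ x' y z, le x x' → z ∈ odot x' y →
      Sat le oplus odot E V P y → Sat le oplus odot E V Q z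
  | .triimpL P Q, x => ∀ x' y z, le x x' → z ∈ odot y x' →
      Sat le oplus odot E V P y → Sat le oplus odot E V Q z

/-- **Persistence Lemma.** In every DIBI model (a DIBI frame together with a
persistent valuation), satisfaction of every formula is preserved upwards along
the preorder: if `x ⊨ P` and `x ⊑ y` then `y ⊨ P`. -/
theorem persistence_lemma {X AP : Type*} (le : X → X → Prop)
    (oplus odot : X → X → Set X) (E : Set X)
    (hFrame : IsDIBIFrame le oplus odot E)
    (V : AP → Set X) (hV : ∀ p x y, x ∈ V p → le x y → y ∈ V p)
    (P : Formula AP) (x y : X)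
    (hx : Sat le oplus odot E V P x) (hxy : le x y) :
    Sat le oplus odot E V P y := by
  induction P generalizing x y with
  | atom p => exact hV p x y hx hxy
  | top => trivial
  | bot => exact hx.elim
  | emp => exact hFrame.unit_closure x y hx hxy
  | and P Q ihP ihQ => exact ⟨ihP x y hx.1 hxy, ihQ x y hx.2 hxy⟩
  | or P Q ihP ihQ =>
      cases hx with
      | inl h => exact Or.inl (ihP x y h hxy)
      | inr h => exact Or.inr (ihQ x y h hxy)
  | imp P Q ihP ihQ =>
      intro z hyz hP
      exact hx z (hFrame.le_trans x y z hxy hyz) hP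
  | sep P Q ihP ihQ =>
      obtain ⟨x', a, b, hlex, hab, hPa, hQb⟩ := hx
      exact ⟨x', a, b, hFrame.le_trans x' x y hlex hxy, hab, hPa, hQb⟩
  | wand P Q ihP ihQ =>
      intro w z hz hPw
      obtain ⟨z', hz'z, hz'⟩ := hFrame.oplus_down y w z x w hz hxy (hFrame.le_refl w)
      exact ihQ z' z (hx w z' hz' hPw) hz'z
  | tri P Q ihP ihQ =>
      obtain ⟨a, b, hab, hPa, hQb⟩ := hx
      obtain ⟨a', b', haa, hbb, hy⟩ := hFrame.odot_up a b x y hab hxy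
      exact ⟨a', b', hy, ihP a a' hPa haa, ihQ b b' hQb hbb⟩
  | triimpR P Q ihP ihQ =>
      intro y' w z hyy hz hPw
      exact hx y' w z (hFrame.le_trans x y y' hxy hyy) hz hPw
  | triimpL P Q ihP ihQ =>
      intro y' w z hyy hz hPw
      exact hx y' w z (hFrame.le_trans x y y' hxy hyy) hz hPw
end

section
/- For every DIBI algebra A, the prime filter frame Pr(A) = (PF_A, ⊆, ⊕_A, ⊙_A, E_A) is a DIBI frame, i.e., it satisfies all twelve DIBI frame conditions. -/
/-- A DIBI algebra: a Heyting algebra equipped with a commutative monoid `sep`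
with unit `unit`, a weak monoid `tri`, residuals `wand`, `triimpR`, `triimpL`,
and the reverse-exchange law. -/
structure DIBIAlg where
  carrier : Type
  le : carrier → carrier → Prop
  inf : carrier → carrier → carrier
  sup : carrier → carrier → carrier
  himp : carrier → carrier → carrier
  top : carrier
  bot : carrier
  sep : carrier → carrier → carrier
  wand : carrier → carrier → carrier
  tri : carrier → carrier → carrier
  triimpR : carrier → carrier → carrier
  triimpL : carrier → carrier → carrier
  unit : carrier
  -- partial order
  le_refl : ∀ a, le a a
  le_trans : ∀ a b c, le a b → le b c → le a c
  le_antisymm : ∀ a b, le a b → le b a → a = b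
  -- bounded lattice
  inf_le_left : ∀ a b, le (inf a b) a
  inf_le_right : ∀ a b, le (inf a b) b
  le_inf : ∀ a b c, le a b → le a c → le a (inf b c)
  le_sup_left : ∀ a b, le a (sup a b)
  le_sup_right : ∀ a b, le b (sup a b)
  sup_le : ∀ a b c, le a c → le b c → le (sup a b) c
  le_top : ∀ a, le a top
  bot_le : ∀ a, le bot a
  -- Heyting implication
  himp_adj : ∀ a b c, le (inf a b) c ↔ le a (himp b c)
  -- (sep, unit) commutative monoid
  sep_comm : ∀ a b, sep a b = sep b a
  sep_assoc : ∀ a b c, sep (sep a b) c = sep a (sep b c)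
  sep_unit : ∀ a, sep a unit = a
  -- (tri, unit) weak monoid
  tri_assoc : ∀ a b c, tri (tri a b) c = tri a (tri b c)
  tri_unit_right : ∀ a, tri a unit = a
  tri_unit_left : ∀ a, le a (tri unit a)
  -- residuation
  wand_adj : ∀ a b c, le (sep a b) c ↔ le a (wand b c)
  triimpR_adj : ∀ a b c, le (tri a b) c ↔ le a (triimpR b c)
  triimpL_adj : ∀ a b c, le (tri a b) c ↔ le b (triimpL a c)
  -- reverse exchange
  rev_exchange : ∀ a b c d, le (sep (tri a b) (tri c d)) (tri (sep a c) (sep b d))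
/-- A prime filter on (the underlying bounded distributive lattice of) a DIBI
algebra: a nonempty, upward-closed, meet-closed subset that is proper and prime. -/
def IsPrimeFilter (A : DIBIAlg) (F : Set A.carrier) : Prop :=
  F.Nonempty ∧
  (∀ x y, x ∈ F → A.le x y → y ∈ F) ∧
  (∀ x y, x ∈ F → y ∈ F → A.inf x y ∈ F) ∧
  A.bot ∉ F ∧
  (∀ x y, A.sup x y ∈ F → x ∈ F ∨ y ∈ F)

/-- The set of prime filters of a DIBI algebra. -/
def PF (A : DIBIAlg) : Type := {F : Set A.carrier // IsPrimeFilter A F}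

/-- `F ⊕_A G` in the prime filter frame. -/
def pfOplus (A : DIBIAlg) (F G : PF A) : Set (PF A) :=
  {H | ∀ a ∈ F.1, ∀ b ∈ G.1, A.sep a b ∈ H.1}

/-- `F ⊙_A G` in the prime filter frame. -/
def pfOdot (A : DIBIAlg) (F G : PF A) : Set (PF A) :=
  {H | ∀ a ∈ F.1, ∀ b ∈ G.1, A.tri a b ∈ H.1}

/-- The units of the prime filter frame: prime filters containing `I`. -/
def pfE (A : DIBIAlg) : Set (PF A) := {F | A.unit ∈ F.1}

namespace DIBIAux

variable (A : DIBIAlg)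

/-! ### Basic order lemmas -/

lemma sep_mono : ∀ a a' b b', A.le a a' → A.le b b' →
    A.le (A.sep a b) (A.sep a' b') := by
  intro a a' b b' h1 h2
  have l1 : A.le (A.sep a b) (A.sep a' b) :=
    (A.wand_adj a b (A.sep a' b)).mpr
      (A.le_trans _ _ _ h1 ((A.wand_adj a' b (A.sep a' b)).mp (A.le_refl _)))
  have l2 : A.le (A.sep a' b) (A.sep a' b') := by
    rw [A.sep_comm a' b, A.sep_comm a' b']
    exact (A.wand_adj b a' (A.sep b' a')).mpr
      (A.le_trans _ _ _ h2 ((A.wand_adj b' a' (A.sep b' a')).mp (A.le_refl _)))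
  exact A.le_trans _ _ _ l1 l2

lemma tri_mono : ∀ a a' b b', A.le a a' → A.le b b' →
    A.le (A.tri a b) (A.tri a' b') := by
  intro a a' b b' h1 h2
  have l1 : A.le (A.tri a b) (A.tri a' b) :=
    (A.triimpR_adj a b (A.tri a' b)).mpr
      (A.le_trans _ _ _ h1 ((A.triimpR_adj a' b (A.tri a' b)).mp (A.le_refl _)))
  have l2 : A.le (A.tri a' b) (A.tri a' b') :=
    (A.triimpL_adj a' b (A.tri a' b')).mpr
      (A.le_trans _ _ _ h2 ((A.triimpL_adj a' b' (A.tri a' b')).mp (A.le_refl _)))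
  exact A.le_trans _ _ _ l1 l2

lemma sep_sup_left (a b c : A.carrier) :
    A.le (A.sep (A.sup a b) c) (A.sup (A.sep a c) (A.sep b c)) :=
  (A.wand_adj _ c _).mpr (A.sup_le _ _ _
    ((A.wand_adj a c _).mp (A.le_sup_left _ _))
    ((A.wand_adj b c _).mp (A.le_sup_right _ _)))

lemma sep_sup_right (a b c : A.carrier) :
    A.le (A.sep a (A.sup b c)) (A.sup (A.sep a b) (A.sep a c)) := by
  rw [A.sep_comm a (A.sup b c), A.sep_comm a b, A.sep_comm a c]
  exact sep_sup_left A b c a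

lemma tri_sup_left (a b c : A.carrier) :
    A.le (A.tri (A.sup a b) c) (A.sup (A.tri a c) (A.tri b c)) :=
  (A.triimpR_adj _ c _).mpr (A.sup_le _ _ _
    ((A.triimpR_adj a c _).mp (A.le_sup_left _ _))
    ((A.triimpR_adj b c _).mp (A.le_sup_right _ _)))

lemma tri_sup_right (a b c : A.carrier) :
    A.le (A.tri a (A.sup b c)) (A.sup (A.tri a b) (A.tri a c)) :=
  (A.triimpL_adj a _ _).mpr (A.sup_le _ _ _
    ((A.triimpL_adj a b _).mp (A.le_sup_left _ _))
    ((A.triimpL_adj a c _).mp (A.le_sup_right _ _)))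

lemma sep_bot_left (b : A.carrier) : A.le (A.sep A.bot b) A.bot :=
  (A.wand_adj _ _ _).mpr (A.bot_le _)

lemma sep_bot_right (a : A.carrier) : A.le (A.sep a A.bot) A.bot := by
  rw [A.sep_comm]; exact sep_bot_left A a

lemma tri_bot_left (b : A.carrier) : A.le (A.tri A.bot b) A.bot :=
  (A.triimpR_adj _ _ _).mpr (A.bot_le _)

lemma tri_bot_right (a : A.carrier) : A.le (A.tri a A.bot) A.bot :=
  (A.triimpL_adj _ _ _).mpr (A.bot_le _)

lemma inf_sup_distrib (x y z : A.carrier) :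
    A.le (A.inf x (A.sup y z)) (A.sup (A.inf x y) (A.inf x z)) := by
  set R := A.sup (A.inf x y) (A.inf x z) with hR
  have hy : A.le y (A.himp x R) :=
    (A.himp_adj y x R).mp (A.le_trans _ _ _
      (A.le_inf _ _ _ (A.inf_le_right y x) (A.inf_le_left y x)) (A.le_sup_left _ _))
  have hz : A.le z (A.himp x R) :=
    (A.himp_adj z x R).mp (A.le_trans _ _ _
      (A.le_inf _ _ _ (A.inf_le_right z x) (A.inf_le_left z x)) (A.le_sup_right _ _))
  have h : A.le (A.inf (A.sup y z) x) R :=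
    (A.himp_adj _ x R).mpr (A.sup_le _ _ _ hy hz)
  exact A.le_trans _ _ _
    (A.le_inf _ _ _ (A.inf_le_right x _) (A.inf_le_left x _)) h

/-! ### Filters and the prime filter separation lemma -/

def UpClosed (S : Set A.carrier) : Prop := ∀ x y, x ∈ S → A.le x y → y ∈ S

def IsFilterA (F : Set A.carrier) : Prop :=
  F.Nonempty ∧ UpClosed A F ∧ ∀ x y, x ∈ F → y ∈ F → A.inf x y ∈ F

lemma exists_prime_between (F0 M : Set A.carrier)
    (hF0 : IsFilterA A F0) (hF0M : F0 ⊆ M)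
    (hMup : UpClosed A M)
    (hMsup : ∀ x y, A.sup x y ∈ M → x ∈ M ∨ y ∈ M)
    (hMbot : A.bot ∉ M) :
    ∃ P, IsPrimeFilter A P ∧ F0 ⊆ P ∧ P ⊆ M := by
  classical
  set S : Set (Set A.carrier) := {P | IsFilterA A P ∧ F0 ⊆ P ∧ P ⊆ M} with hS
  have hchain : ∀ c ⊆ S, IsChain (· ⊆ ·) c → c.Nonempty →
      ∃ ub ∈ S, ∀ s ∈ c, s ⊆ ub := by
    rintro c hcS hc ⟨c0, hc0⟩
    refine ⟨⋃₀ c, ⟨⟨?_, ?_, ?_⟩, ?_, ?_⟩, fun s hs => Set.subset_sUnion_of_mem hs⟩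
    · obtain ⟨x, hx⟩ := (hcS hc0).1.1
      exact ⟨x, c0, hc0, hx⟩
    · rintro x y ⟨P, hPc, hxP⟩ hxy
      exact ⟨P, hPc, (hcS hPc).1.2.1 x y hxP hxy⟩
    · rintro x y ⟨P, hPc, hxP⟩ ⟨Q, hQc, hyQ⟩
      rcases hc.total hPc hQc with h | h
      · exact ⟨Q, hQc, (hcS hQc).1.2.2 x y (h hxP) hyQ⟩
      · exact ⟨P, hPc, (hcS hPc).1.2.2 x y hxP (h hyQ)⟩
    · exact fun x hx => ⟨c0, hc0, (hcS hc0).2.1 hx⟩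
    · rintro x ⟨P, hPc, hxP⟩
      exact (hcS hPc).2.2 hxP
  obtain ⟨P, hPsub, hPmax⟩ :=
    zorn_subset_nonempty S hchain F0 ⟨hF0, subset_rfl, hF0M⟩
  obtain ⟨⟨hne, hup, hinf⟩, hF0P, hPM⟩ := hPmax.prop
  refine ⟨P, ⟨hne, hup, hinf, fun h => hMbot (hPM h), ?_⟩, hF0P, hPM⟩
  intro x y hxy
  by_contra hcon
  push_neg at hcon
  obtain ⟨hx, hy⟩ := hcon
  -- For w ∉ P with w ∨ _ considerations: extend P by w and find p with inf p w ∉ M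
  have key : ∀ w, w ∉ P → ∃ p ∈ P, A.inf p w ∉ M := by
    intro w hw
    by_contra hall
    push_neg at hall
    set Pw : Set A.carrier := {s | ∃ p ∈ P, A.le (A.inf p w) s} with hPw
    have hPwS : Pw ∈ S := by
      refine ⟨⟨?_, ?_, ?_⟩, ?_, ?_⟩
      · obtain ⟨p, hp⟩ := hne
        exact ⟨A.inf p w, p, hp, A.le_refl _⟩
      · rintro s t ⟨p, hp, hps⟩ hst
        exact ⟨p, hp, A.le_trans _ _ _ hps hst⟩
      · rintro s t ⟨p, hp, hps⟩ ⟨q, hq, hqt⟩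
        refine ⟨A.inf p q, hinf p q hp hq, ?_⟩
        have h1 : A.le (A.inf (A.inf p q) w) (A.inf p w) :=
          A.le_inf _ _ _ (A.le_trans _ _ _ (A.inf_le_left _ _) (A.inf_le_left _ _))
            (A.inf_le_right _ _)
        have h2 : A.le (A.inf (A.inf p q) w) (A.inf q w) :=
          A.le_inf _ _ _ (A.le_trans _ _ _ (A.inf_le_left _ _) (A.inf_le_right _ _))
            (A.inf_le_right _ _)
        exact A.le_inf _ _ _ (A.le_trans _ _ _ h1 hps) (A.le_trans _ _ _ h2 hqt)
      · intro f hf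
        exact ⟨f, hF0P hf, A.inf_le_left _ _⟩
      · rintro s ⟨p, hp, hps⟩
        exact hMup _ _ (hall p hp) hps
    have hPPw : P ⊆ Pw := fun p hp => ⟨p, hp, A.inf_le_left _ _⟩
    have := hPmax.2 hPwS hPPw
    obtain ⟨p, hp⟩ := hne
    exact hw (this ⟨p, hp, A.inf_le_right _ _⟩)
  obtain ⟨p, hp, hpx⟩ := key x hx
  obtain ⟨q, hq, hqy⟩ := key y hy
  set r := A.inf p q with hr
  have hrP : r ∈ P := hinf p q hp hq
  have hrx : A.inf r x ∉ M := fun h => hpx (hMup _ _ h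
    (A.le_inf _ _ _ (A.le_trans _ _ _ (A.inf_le_left _ _) (A.inf_le_left _ _))
      (A.inf_le_right _ _)))
  have hry : A.inf r y ∉ M := fun h => hqy (hMup _ _ h
    (A.le_inf _ _ _ (A.le_trans _ _ _ (A.inf_le_left _ _) (A.inf_le_right _ _))
      (A.inf_le_right _ _)))
  have hmem : A.inf r (A.sup x y) ∈ M := hPM (hinf _ _ hrP hxy)
  have := hMsup _ _ (hMup _ _ hmem (inf_sup_distrib A r x y))
  rcases this with h | h
  · exact hrx h
  · exact hry h

/-! ### Generated filters and the residuated `M`-sets -/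

def prodUp (f : A.carrier → A.carrier → A.carrier) (Y Z : Set A.carrier) :
    Set A.carrier := {s | ∃ b ∈ Y, ∃ c ∈ Z, A.le (f b c) s}

lemma prodUp_filter (f : A.carrier → A.carrier → A.carrier)
    (hmono : ∀ a a' b b', A.le a a' → A.le b b' → A.le (f a b) (f a' b'))
    (Y Z : Set A.carrier) (hYne : Y.Nonempty) (hZne : Z.Nonempty)
    (hYinf : ∀ x y, x ∈ Y → y ∈ Y → A.inf x y ∈ Y)
    (hZinf : ∀ x y, x ∈ Z → y ∈ Z → A.inf x y ∈ Z) :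
    IsFilterA A (prodUp A f Y Z) := by
  refine ⟨?_, ?_, ?_⟩
  · obtain ⟨b, hb⟩ := hYne; obtain ⟨c, hc⟩ := hZne
    exact ⟨f b c, b, hb, c, hc, A.le_refl _⟩
  · rintro s t ⟨b, hb, c, hc, hle⟩ hst
    exact ⟨b, hb, c, hc, A.le_trans _ _ _ hle hst⟩
  · rintro s t ⟨b, hb, c, hc, hle⟩ ⟨b', hb', c', hc', hle'⟩
    refine ⟨A.inf b b', hYinf _ _ hb hb', A.inf c c', hZinf _ _ hc hc', ?_⟩
    refine A.le_inf _ _ _ ?_ ?_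
    · exact A.le_trans _ _ _ (hmono _ _ _ _ (A.inf_le_left _ _) (A.inf_le_left _ _)) hle
    · exact A.le_trans _ _ _ (hmono _ _ _ _ (A.inf_le_right _ _) (A.inf_le_right _ _)) hle'

def Mset (f : A.carrier → A.carrier → A.carrier) (X F : Set A.carrier) :
    Set A.carrier := {s | ∀ a ∈ X, f a s ∈ F}

lemma exists_prime_sub_Mset (f : A.carrier → A.carrier → A.carrier)
    (hmono : ∀ a a' b b', A.le a a' → A.le b b' → A.le (f a b) (f a' b'))
    (hsup : ∀ a b c, A.le (f a (A.sup b c)) (A.sup (f a b) (f a c)))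
    (hbot : ∀ a, A.le (f a A.bot) A.bot)
    (X : Set A.carrier) (hXne : X.Nonempty)
    (hXinf : ∀ x y, x ∈ X → y ∈ X → A.inf x y ∈ X)
    (F : Set A.carrier) (hF : IsPrimeFilter A F)
    (F0 : Set A.carrier) (hF0 : IsFilterA A F0) (hsub : F0 ⊆ Mset A f X F) :
    ∃ P, IsPrimeFilter A P ∧ F0 ⊆ P ∧ P ⊆ Mset A f X F := by
  obtain ⟨hFne, hFup, hFinf, hFbot, hFpr⟩ := hF
  refine exists_prime_between A F0 _ hF0 hsub ?_ ?_ ?_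
  · intro s t hs hst a ha
    exact hFup _ _ (hs a ha) (hmono a a s t (A.le_refl _) hst)
  · intro s t hst
    by_contra hcon
    push_neg at hcon
    obtain ⟨hs, ht⟩ := hcon
    simp only [Mset, Set.mem_setOf_eq, not_forall] at hs ht
    obtain ⟨a, ha, has⟩ := hs
    obtain ⟨a', ha', hat⟩ := ht
    have haa : A.inf a a' ∈ X := hXinf _ _ ha ha'
    have h1 : f (A.inf a a') (A.sup s t) ∈ F := hst _ haa
    have h2 : A.sup (f (A.inf a a') s) (f (A.inf a a') t) ∈ F :=
      hFup _ _ h1 (hsup _ _ _)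
    rcases hFpr _ _ h2 with h | h
    · exact has (hFup _ _ h (hmono _ _ _ _ (A.inf_le_left _ _) (A.le_refl _)))
    · exact hat (hFup _ _ h (hmono _ _ _ _ (A.inf_le_right _ _) (A.le_refl _)))
  · intro hb
    obtain ⟨a, ha⟩ := hXne
    exact hFbot (hFup _ _ (hb a ha) (hbot a))

end DIBIAux

open DIBIAux
/-- **Prime filter frames are DIBI frames.** For every DIBI algebra `A`, the prime
filter frame `Pr(A) = (PF_A, ⊆, ⊕_A, ⊙_A, E_A)` satisfies all twelve DIBI frame
conditions. -/
theorem primeFilterFrame_isDIBIFrame (A : DIBIAlg) :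
    IsDIBIFrame (fun F G : PF A => F.1 ⊆ G.1) (pfOplus A) (pfOdot A) (pfE A) := by
  -- the unit principal filter
  have unitF : IsFilterA A {x | A.le A.unit x} :=
    ⟨⟨A.unit, A.le_refl _⟩, fun x y hx hxy => A.le_trans _ _ _ hx hxy,
      fun x y hx hy => A.le_inf _ _ _ hx hy⟩
  refine
    { le_refl := fun x => subset_rfl
      le_trans := fun x y z h1 h2 => h1.trans h2
      oplus_down := fun x y z x' y' hz hx hy =>
        ⟨z, subset_rfl, fun a ha b hb => hz a (hx ha) b (hy hb)⟩
      odot_up := fun x y z z' hz hzz' =>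
        ⟨x, y, subset_rfl, subset_rfl, fun a ha b hb => hzz' (hz a ha b hb)⟩
      oplus_comm := fun x y z hz a ha b hb => by
        rw [A.sep_comm]; exact hz b hb a ha
      oplus_assoc := ?oplus_assoc
      oplus_unit_exists := ?oplus_unit_exists
      oplus_unit_coherence := fun e x y he hx b hb => by
        have := hx b hb A.unit he
        rwa [A.sep_unit] at this
      odot_assoc := ?odot_assoc
      odot_unit_exists_left := ?odot_unit_exists_left
      odot_unit_exists_right := ?odot_unit_exists_right
      odot_coherence_right := fun e x y he hx b hb => by
        have := hx b hb A.unit he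
        rwa [A.tri_unit_right] at this
      unit_closure := fun e e' he hee' => hee' he
      rev_exchange := ?rev_exchange }
  case oplus_assoc =>
    intro x y z t w hw ht
    obtain ⟨P, hP, hsub1, hsub2⟩ :=
      exists_prime_sub_Mset A A.sep (sep_mono A) (sep_sup_right A) (sep_bot_right A)
        x.1 x.2.1 x.2.2.2.1 w.1 w.2
        (prodUp A A.sep y.1 z.1)
        (prodUp_filter A A.sep (sep_mono A) y.1 z.1 y.2.1 z.2.1 y.2.2.2.1 z.2.2.2.1)
        (by
          rintro s ⟨b, hb, c, hc, hle⟩ a ha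
          have h1 : A.sep (A.sep a b) c ∈ w.1 := hw _ (ht a ha b hb) c hc
          have h2 : A.le (A.sep (A.sep a b) c) (A.sep a s) := by
            rw [A.sep_assoc]
            exact sep_mono A _ _ _ _ (A.le_refl _) hle
          exact w.2.2.1 _ _ h1 h2)
    exact ⟨⟨P, hP⟩, fun b hb c hc => hsub1 ⟨b, hb, c, hc, A.le_refl _⟩,
      fun a ha s hs => hsub2 hs a ha⟩
  case oplus_unit_exists =>
    intro x
    obtain ⟨P, hP, hsub1, hsub2⟩ :=
      exists_prime_sub_Mset A (fun b a => A.sep a b)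
        (fun a a' b b' h1 h2 => sep_mono A b b' a a' h2 h1)
        (fun a b c => sep_sup_left A b c a)
        (fun a => sep_bot_left A a)
        x.1 x.2.1 x.2.2.2.1 x.1 x.2
        {s | A.le A.unit s} unitF
        (by
          intro s hs b hb
          have : A.le b (A.sep s b) := by
            have h1 : A.le (A.sep A.unit b) (A.sep s b) :=
              sep_mono A _ _ _ _ hs (A.le_refl _)
            rw [A.sep_comm A.unit b, A.sep_unit] at h1
            exact h1
          exact x.2.2.1 _ _ hb this)
    exact ⟨⟨P, hP⟩, hsub1 (A.le_refl _), fun a ha b hb => hsub2 ha b hb⟩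
  case odot_assoc =>
    intro x y z w
    constructor
    · rintro ⟨t, hw, ht⟩
      obtain ⟨P, hP, hsub1, hsub2⟩ :=
        exists_prime_sub_Mset A A.tri (tri_mono A) (tri_sup_right A) (tri_bot_right A)
          x.1 x.2.1 x.2.2.2.1 w.1 w.2
          (prodUp A A.tri y.1 z.1)
          (prodUp_filter A A.tri (tri_mono A) y.1 z.1 y.2.1 z.2.1 y.2.2.2.1 z.2.2.2.1)
          (by
            rintro s ⟨b, hb, c, hc, hle⟩ a ha
            have h1 : A.tri (A.tri a b) c ∈ w.1 := hw _ (ht a ha b hb) c hc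
            have h2 : A.le (A.tri (A.tri a b) c) (A.tri a s) := by
              rw [A.tri_assoc]
              exact tri_mono A _ _ _ _ (A.le_refl _) hle
            exact w.2.2.1 _ _ h1 h2)
      exact ⟨⟨P, hP⟩, fun b hb c hc => hsub1 ⟨b, hb, c, hc, A.le_refl _⟩,
        fun a ha s hs => hsub2 hs a ha⟩
    · rintro ⟨s, hs, hw⟩
      obtain ⟨P, hP, hsub1, hsub2⟩ :=
        exists_prime_sub_Mset A (fun c t => A.tri t c)
          (fun a a' b b' h1 h2 => tri_mono A b b' a a' h2 h1)
          (fun a b c => tri_sup_left A b c a)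
          (fun a => tri_bot_left A a)
          z.1 z.2.1 z.2.2.2.1 w.1 w.2
          (prodUp A A.tri x.1 y.1)
          (prodUp_filter A A.tri (tri_mono A) x.1 y.1 x.2.1 y.2.1 x.2.2.2.1 y.2.2.2.1)
          (by
            rintro tt ⟨a, ha, b, hb, hle⟩ c hc
            have h1 : A.tri a (A.tri b c) ∈ w.1 := hw a ha _ (hs b hb c hc)
            have h2 : A.le (A.tri a (A.tri b c)) (A.tri tt c) := by
              rw [← A.tri_assoc]
              exact tri_mono A _ _ _ _ hle (A.le_refl _)
            exact w.2.2.1 _ _ h1 h2)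
      exact ⟨⟨P, hP⟩, fun t' ht' c hc => hsub2 ht' c hc,
        fun a ha b hb => hsub1 ⟨a, ha, b, hb, A.le_refl _⟩⟩
  case odot_unit_exists_left =>
    intro x
    obtain ⟨P, hP, hsub1, hsub2⟩ :=
      exists_prime_sub_Mset A (fun b a => A.tri a b)
        (fun a a' b b' h1 h2 => tri_mono A b b' a a' h2 h1)
        (fun a b c => tri_sup_left A b c a)
        (fun a => tri_bot_left A a)
        x.1 x.2.1 x.2.2.2.1 x.1 x.2
        {s | A.le A.unit s} unitF
        (by
          intro s hs b hb
          have h1 : A.le b (A.tri s b) :=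
            A.le_trans _ _ _ (A.tri_unit_left b)
              (tri_mono A _ _ _ _ hs (A.le_refl _))
          exact x.2.2.1 _ _ hb h1)
    exact ⟨⟨P, hP⟩, hsub1 (A.le_refl _), fun a ha b hb => hsub2 ha b hb⟩
  case odot_unit_exists_right =>
    intro x
    obtain ⟨P, hP, hsub1, hsub2⟩ :=
      exists_prime_sub_Mset A A.tri (tri_mono A) (tri_sup_right A) (tri_bot_right A)
        x.1 x.2.1 x.2.2.2.1 x.1 x.2
        {s | A.le A.unit s} unitF
        (by
          intro s hs a ha
          have h1 : A.le a (A.tri a s) := by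
            have := tri_mono A a a A.unit s (A.le_refl _) hs
            rwa [A.tri_unit_right] at this
          exact x.2.2.1 _ _ ha h1)
    exact ⟨⟨P, hP⟩, hsub1 (A.le_refl _), fun a ha b hb => hsub2 hb a ha⟩
  case rev_exchange =>
    intro x y z y1 y2 z1 z2 hx hy hz
    -- the filter generated by products of Y2 and Z2
    set W : Set A.carrier := prodUp A A.sep y2.1 z2.1 with hW
    have hWF : IsFilterA A W :=
      prodUp_filter A A.sep (sep_mono A) y2.1 z2.1 y2.2.1 z2.2.1 y2.2.2.2.1 z2.2.2.2.1
    -- first prime filter U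
    obtain ⟨U, hU, hUsub1, hUsub2⟩ :=
      exists_prime_sub_Mset A (fun s u => A.tri u s)
        (fun a a' b b' h1 h2 => tri_mono A b b' a a' h2 h1)
        (fun a b c => tri_sup_left A b c a)
        (fun a => tri_bot_left A a)
        W hWF.1 hWF.2.2 x.1 x.2
        (prodUp A A.sep y1.1 z1.1)
        (prodUp_filter A A.sep (sep_mono A) y1.1 z1.1 y1.2.1 z1.2.1 y1.2.2.2.1 z1.2.2.2.1)
        (by
          rintro u ⟨a, ha, c, hc, hle⟩ s ⟨b, hb, d, hd, hle'⟩
          have h1 : A.sep (A.tri a b) (A.tri c d) ∈ x.1 :=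
            hx _ (hy a ha b hb) _ (hz c hc d hd)
          have h2 : A.le (A.sep (A.tri a b) (A.tri c d)) (A.tri u s) :=
            A.le_trans _ _ _ (A.rev_exchange a b c d)
              (tri_mono A _ _ _ _ hle hle')
          exact x.2.2.1 _ _ h1 h2)
    -- second prime filter V
    obtain ⟨V, hV, hVsub1, hVsub2⟩ :=
      exists_prime_sub_Mset A A.tri (tri_mono A) (tri_sup_right A) (tri_bot_right A)
        U hU.1 hU.2.2.1 x.1 x.2
        W hWF
        (fun s hs u hu => hUsub2 hu s hs)
    refine ⟨⟨U, hU⟩, ⟨V, hV⟩, ?_, ?_, ?_⟩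
    · exact fun a ha c hc => hUsub1 ⟨a, ha, c, hc, A.le_refl _⟩
    · exact fun b hb d hd => hVsub1 ⟨b, hb, d, hd, A.le_refl _⟩
    · exact fun u hu v hv => hVsub2 hv u hu
end

section
/- For every DIBI frame X = (X, ⊑, ⊕, ⊙, E), the complex algebra Com(X), whose carrier is the set of ⊑-upward-closed subsets of X with operations ∩, ∪, ⇒_X, ⊤ = X, ⊥ = ∅, •_X, ⊸_X, ▷_X, ▷→_X, ▷-_X, and unit E, is a DIBI algebra. -/
section ComplexOps

variable {X : Type*} (le : X → X → Prop) (oplus odot : X → X → Set X)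

/-- Sets that are upward-closed with respect to the preorder. -/
def UpClosed (A : Set X) : Prop := ∀ a b, a ∈ A → le a b → b ∈ A

/-- Heyting implication of the complex algebra. -/
def cHimp (A B : Set X) : Set X := {a | ∀ b, le a b → b ∈ A → b ∈ B}

/-- The operation `•` of the complex algebra. -/
def cSep (A B : Set X) : Set X :=
  {x | ∃ x' a b, le x' x ∧ x' ∈ oplus a b ∧ a ∈ A ∧ b ∈ B}

/-- The operation `⊸` of the complex algebra. -/
def cWand (A B : Set X) : Set X :=
  {x | ∀ a b, b ∈ oplus x a → a ∈ A → b ∈ B}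

/-- The operation `▷` of the complex algebra. -/
def cTri (A B : Set X) : Set X :=
  {x | ∃ a b, x ∈ odot a b ∧ a ∈ A ∧ b ∈ B}

/-- The operation `▷→` of the complex algebra. -/
def cTriimpR (A B : Set X) : Set X :=
  {x | ∀ x' a b, le x x' → b ∈ odot x' a → a ∈ A → b ∈ B}

/-- The operation `▷-` of the complex algebra. -/
def cTriimpL (A B : Set X) : Set X :=
  {x | ∀ x' a b, le x x' → b ∈ odot a x' → a ∈ A → b ∈ B}

end ComplexOps
/-- `IsDIBIAlgOn carrier le ...` says that the given operations restricted to
`carrier` constitute a DIBI algebra: a Heyting algebra together with a commutative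
monoid `sep` with unit `unit`, a weak monoid `tri`, the residuals `wand`,
`triimpR`, `triimpL`, and the reverse-exchange law. -/
structure IsDIBIAlgOn {α : Type*} (carrier : Set α) (le : α → α → Prop)
    (inf sup himp sep wand tri triimpR triimpL : α → α → α)
    (top bot unit : α) : Prop where
  -- the operations do not leave the carrier
  top_mem : top ∈ carrier
  bot_mem : bot ∈ carrier
  unit_mem : unit ∈ carrier
  inf_mem : ∀ a ∈ carrier, ∀ b ∈ carrier, inf a b ∈ carrier
  sup_mem : ∀ a ∈ carrier, ∀ b ∈ carrier, sup a b ∈ carrier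
  himp_mem : ∀ a ∈ carrier, ∀ b ∈ carrier, himp a b ∈ carrier
  sep_mem : ∀ a ∈ carrier, ∀ b ∈ carrier, sep a b ∈ carrier
  wand_mem : ∀ a ∈ carrier, ∀ b ∈ carrier, wand a b ∈ carrier
  tri_mem : ∀ a ∈ carrier, ∀ b ∈ carrier, tri a b ∈ carrier
  triimpR_mem : ∀ a ∈ carrier, ∀ b ∈ carrier, triimpR a b ∈ carrier
  triimpL_mem : ∀ a ∈ carrier, ∀ b ∈ carrier, triimpL a b ∈ carrier
  -- partial order
  le_refl : ∀ a ∈ carrier, le a a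
  le_trans : ∀ a ∈ carrier, ∀ b ∈ carrier, ∀ c ∈ carrier, le a b → le b c → le a c
  le_antisymm : ∀ a ∈ carrier, ∀ b ∈ carrier, le a b → le b a → a = b
  -- bounded lattice
  inf_le_left : ∀ a ∈ carrier, ∀ b ∈ carrier, le (inf a b) a
  inf_le_right : ∀ a ∈ carrier, ∀ b ∈ carrier, le (inf a b) b
  le_inf : ∀ a ∈ carrier, ∀ b ∈ carrier, ∀ c ∈ carrier, le a b → le a c → le a (inf b c)
  le_sup_left : ∀ a ∈ carrier, ∀ b ∈ carrier, le a (sup a b)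
  le_sup_right : ∀ a ∈ carrier, ∀ b ∈ carrier, le b (sup a b)
  sup_le : ∀ a ∈ carrier, ∀ b ∈ carrier, ∀ c ∈ carrier, le a c → le b c → le (sup a b) c
  le_top : ∀ a ∈ carrier, le a top
  bot_le : ∀ a ∈ carrier, le bot a
  -- Heyting implication
  himp_adj : ∀ a ∈ carrier, ∀ b ∈ carrier, ∀ c ∈ carrier,
    (le (inf a b) c ↔ le a (himp b c))
  -- (sep, unit) commutative monoid
  sep_comm : ∀ a ∈ carrier, ∀ b ∈ carrier, sep a b = sep b a
  sep_assoc : ∀ a ∈ carrier, ∀ b ∈ carrier, ∀ c ∈ carrier,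
    sep (sep a b) c = sep a (sep b c)
  sep_unit : ∀ a ∈ carrier, sep a unit = a
  -- (tri, unit) weak monoid
  tri_assoc : ∀ a ∈ carrier, ∀ b ∈ carrier, ∀ c ∈ carrier,
    tri (tri a b) c = tri a (tri b c)
  tri_unit_right : ∀ a ∈ carrier, tri a unit = a
  tri_unit_left : ∀ a ∈ carrier, le a (tri unit a)
  -- residuation
  wand_adj : ∀ a ∈ carrier, ∀ b ∈ carrier, ∀ c ∈ carrier,
    (le (sep a b) c ↔ le a (wand b c))
  triimpR_adj : ∀ a ∈ carrier, ∀ b ∈ carrier, ∀ c ∈ carrier,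
    (le (tri a b) c ↔ le a (triimpR b c))
  triimpL_adj : ∀ a ∈ carrier, ∀ b ∈ carrier, ∀ c ∈ carrier,
    (le (tri a b) c ↔ le b (triimpL a c))
  -- reverse exchange
  rev_exchange : ∀ a ∈ carrier, ∀ b ∈ carrier, ∀ c ∈ carrier, ∀ d ∈ carrier,
    le (sep (tri a b) (tri c d)) (tri (sep a c) (sep b d))

/-- **The complex algebra of a DIBI frame is a DIBI algebra.** For every DIBI frame
`(X, ⊑, ⊕, ⊙, E)`, the set of `⊑`-upward-closed subsets of `X`, with operations
`∩`, `∪`, `⇒_X`, top `X`, bottom `∅`, `•_X`, `⊸_X`, `▷_X`, `▷→_X`, `▷-_X` and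
unit `E`, is a DIBI algebra. -/
theorem complexAlgebra_isDIBIAlg {X : Type*} (le : X → X → Prop)
    (oplus odot : X → X → Set X) (E : Set X)
    (hFrame : IsDIBIFrame le oplus odot E) :
    IsDIBIAlgOn {A : Set X | UpClosed le A} (· ⊆ ·)
      (· ∩ ·) (· ∪ ·) (cHimp le) (cSep le oplus) (cWand oplus)
      (cTri odot) (cTriimpR le odot) (cTriimpL le odot)
      Set.univ ∅ E := by
  obtain ⟨hrefl, htrans, hdown, hup, hcomm, hassoc, huex, hucoh, hoassoc, huexl, huexr,
    hocoh, hucl, hrex⟩ := hFrame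
  have sep_comm : ∀ A B : Set X, cSep le oplus A B = cSep le oplus B A := by
    intro A B
    ext x
    constructor <;> rintro ⟨x', a, b, h1, h2, h3, h4⟩ <;>
      exact ⟨x', b, a, h1, hcomm _ _ _ h2, h4, h3⟩
  have sep_assoc1 : ∀ A B C : Set X,
      cSep le oplus (cSep le oplus A B) C ⊆ cSep le oplus A (cSep le oplus B C) := by
    rintro A B C x ⟨x', t, c, hx'x, hx', ⟨t', a, b, ht't, ht', ha, hb⟩, hc⟩
    obtain ⟨z', hz'x', hz'⟩ := hdown t c x' t' c hx' ht't (hrefl c)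
    obtain ⟨s, hs, hz's⟩ := hassoc a b c t' z' hz' ht'
    exact ⟨z', a, s, htrans _ _ _ hz'x' hx'x, hz's, ha, s, b, c, hrefl s, hs, hb, hc⟩
  constructor
  -- membership in carrier
  case top_mem => intro a b _ _; trivial
  case bot_mem => intro a b h _; exact h
  case unit_mem => exact fun a b ha hab => hucl a b ha hab
  case inf_mem =>
    rintro A hA B hB a b ⟨haA, haB⟩ hab; exact ⟨hA a b haA hab, hB a b haB hab⟩
  case sup_mem =>
    rintro A hA B hB a b (haA | haB) hab
    · exact Or.inl (hA a b haA hab)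
    · exact Or.inr (hB a b haB hab)
  case himp_mem =>
    rintro A hA B hB a c ha hac b hcb hbA
    exact ha b (htrans _ _ _ hac hcb) hbA
  case sep_mem =>
    rintro A hA B hB x y ⟨x', a, b, h1, h2, h3, h4⟩ hxy
    exact ⟨x', a, b, htrans _ _ _ h1 hxy, h2, h3, h4⟩
  case wand_mem =>
    rintro A hA B hB x y hx hxy a b hb ha
    obtain ⟨b', hb'b, hb'⟩ := hdown y a b x a hb hxy (hrefl a)
    exact hB _ _ (hx a b' hb' ha) hb'b
  case tri_mem =>
    rintro A hA B hB x y ⟨a, b, hx, ha, hb⟩ hxy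
    obtain ⟨a', b', haa', hbb', hy⟩ := hup a b x y hx hxy
    exact ⟨a', b', hy, hA _ _ ha haa', hB _ _ hb hbb'⟩
  case triimpR_mem =>
    rintro A hA B hB x y hx hxy x' a b hyx' hb ha
    exact hx x' a b (htrans _ _ _ hxy hyx') hb ha
  case triimpL_mem =>
    rintro A hA B hB x y hx hxy x' a b hyx' hb ha
    exact hx x' a b (htrans _ _ _ hxy hyx') hb ha
  -- order
  case le_refl => intro A _; exact subset_rfl
  case le_trans => intro A _ B _ C _ h1 h2; exact h1.trans h2
  case le_antisymm => intro A _ B _ h1 h2; exact Set.Subset.antisymm h1 h2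
  case inf_le_left => intro A _ B _; exact Set.inter_subset_left
  case inf_le_right => intro A _ B _; exact Set.inter_subset_right
  case le_inf => intro A _ B _ C _ h1 h2; exact Set.subset_inter h1 h2
  case le_sup_left => intro A _ B _; exact Set.subset_union_left
  case le_sup_right => intro A _ B _; exact Set.subset_union_right
  case sup_le => intro A _ B _ C _ h1 h2; exact Set.union_subset h1 h2
  case le_top => intro A _; exact Set.subset_univ A
  case bot_le => intro A _; exact Set.empty_subset A
  case himp_adj =>
    intro A hA B _ C _
    constructor
    · intro h a haA b hab hbB
      exact h ⟨hA a b haA hab, hbB⟩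
    · rintro h x ⟨hxA, hxB⟩
      exact h hxA x (hrefl x) hxB
  case sep_comm => intro A _ B _; exact sep_comm A B
  case sep_assoc =>
    intro A _ B _ C _
    apply Set.Subset.antisymm (sep_assoc1 A B C)
    calc cSep le oplus A (cSep le oplus B C)
        = cSep le oplus (cSep le oplus C B) A := by rw [sep_comm, sep_comm B C]
      _ ⊆ cSep le oplus C (cSep le oplus B A) := sep_assoc1 C B A
      _ = cSep le oplus (cSep le oplus A B) C := by rw [sep_comm, sep_comm B A]
  case sep_unit =>
    intro A hA
    apply Set.Subset.antisymm
    · rintro x ⟨x', a, e, hx'x, hx', ha, he⟩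
      exact hA x' x (hA a x' ha (hucoh e x' a he hx')) hx'x
    · intro a ha
      obtain ⟨e, he, hae⟩ := huex a
      exact ⟨a, a, e, hrefl a, hcomm _ _ _ hae, ha, he⟩
  case tri_assoc =>
    intro A _ B _ C _
    ext x
    constructor
    · rintro ⟨t, c, hx, ⟨a, b, ht, ha, hb⟩, hc⟩
      obtain ⟨s, hs, hxs⟩ := (hoassoc a b c x).mp ⟨t, hx, ht⟩
      exact ⟨a, s, hxs, ha, b, c, hs, hb, hc⟩
    · rintro ⟨a, s, hx, ha, b, c, hs, hb, hc⟩
      obtain ⟨t, hxt, ht⟩ := (hoassoc a b c x).mpr ⟨s, hs, hx⟩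
      exact ⟨t, c, hxt, ⟨a, b, ht, ha, hb⟩, hc⟩
  case tri_unit_right =>
    intro A hA
    apply Set.Subset.antisymm
    · rintro x ⟨a, e, hx, ha, he⟩
      exact hA a x ha (hocoh e x a he hx)
    · intro a ha
      obtain ⟨e, he, hae⟩ := huexr a
      exact ⟨a, e, hae, ha, he⟩
  case tri_unit_left =>
    intro A _ a ha
    obtain ⟨e, he, hae⟩ := huexl a
    exact ⟨e, a, hae, he, ha⟩
  case wand_adj =>
    intro A _ B _ C hC
    constructor
    · intro h a haA b x hx hbB
      exact h ⟨x, a, b, hrefl x, hx, haA, hbB⟩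
    · rintro h x ⟨x', a, b, hx'x, hx', ha, hb⟩
      exact hC _ _ (h ha b x' hx' hb) hx'x
  case triimpR_adj =>
    intro A hA B _ C _
    constructor
    · intro h a haA x' b y hax' hy hbB
      exact h ⟨x', b, hy, hA a x' haA hax', hbB⟩
    · rintro h x ⟨a, b, hx, ha, hb⟩
      exact h ha a b x (hrefl a) hx hb
  case triimpL_adj =>
    intro A _ B hB C _
    constructor
    · intro h b hbB x' a y hbx' hy haA
      exact h ⟨a, x', hy, haA, hB b x' hbB hbx'⟩
    · rintro h x ⟨a, b, hx, ha, hb⟩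
      exact h hb b a x (hrefl b) hx ha
  case rev_exchange =>
    intro A _ B _ C _ D _
    rintro x ⟨x', y, z, hx'x, hx', ⟨y1, y2, hy, hy1, hy2⟩, z1, z2, hz, hz1, hz2⟩
    obtain ⟨u, v, hu, hv, hx'uv⟩ := hrex x' y z y1 y2 z1 z2 hx' hy hz
    obtain ⟨u', v', huu', hvv', hxuv⟩ := hup u v x' x hx'uv hx'x
    exact ⟨u', v', hxuv, ⟨u, y1, z1, huu', hu, hy1, hz1⟩, v, y2, z2, hvv', hv, hy2, hz2⟩
end

section
/- Representation theorem for DIBI algebras: every DIBI algebra A embeds into the complex algebra of its prime filter frame; explicitly, the map θ_A : A → Com(Pr(A)) defined by θ_A(a) = {F ∈ PF_A : a ∈ F} is an injective homomorphism of DIBI algebras. -/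
/-- The inclusion order on prime filters. -/
def pfLe (A : DIBIAlg) (F G : PF A) : Prop := F.1 ⊆ G.1

/-- The map `θ_A` sending an element to the set of prime filters containing it. -/
def theta (A : DIBIAlg) (a : A.carrier) : Set (PF A) := {F | a ∈ F.1}

namespace DIBIRep

variable {A : DIBIAlg}

/-- A filter: nonempty, upward closed, meet closed. -/
def IsFilter (A : DIBIAlg) (F : Set A.carrier) : Prop :=
  F.Nonempty ∧ (∀ x y, x ∈ F → A.le x y → y ∈ F) ∧ (∀ x y, x ∈ F → y ∈ F → A.inf x y ∈ F)

lemma inf_mono {a b c d : A.carrier} (h1 : A.le a b) (h2 : A.le c d) :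
    A.le (A.inf a c) (A.inf b d) :=
  A.le_inf _ _ _ (A.le_trans _ _ _ (A.inf_le_left _ _) h1)
    (A.le_trans _ _ _ (A.inf_le_right _ _) h2)

lemma distrib (c x y : A.carrier) :
    A.le (A.inf c (A.sup x y)) (A.sup (A.inf c x) (A.inf c y)) := by
  have hx : A.le x (A.himp c (A.sup (A.inf c x) (A.inf c y))) := by
    rw [← A.himp_adj]
    exact A.le_trans _ _ _
      (A.le_inf _ _ _ (A.inf_le_right _ _) (A.inf_le_left _ _)) (A.le_sup_left _ _)
  have hy : A.le y (A.himp c (A.sup (A.inf c x) (A.inf c y))) := by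
    rw [← A.himp_adj]
    exact A.le_trans _ _ _
      (A.le_inf _ _ _ (A.inf_le_right _ _) (A.inf_le_left _ _)) (A.le_sup_right _ _)
  have h2 : A.le (A.inf (A.sup x y) c) (A.sup (A.inf c x) (A.inf c y)) :=
    (A.himp_adj (A.sup x y) c _).mpr (A.sup_le _ _ _ hx hy)
  exact A.le_trans _ _ _
    (A.le_inf _ _ _ (A.inf_le_right _ _) (A.inf_le_left _ _)) h2

/-- Zorn-based prime filter extension lemma. -/
lemma primeExtension (Q : A.carrier → Prop)
    (hup : ∀ x y, Q x → A.le x y → Q y)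
    (hbot : ¬ Q A.bot)
    (hmp : ∀ c x y, Q (A.inf c (A.sup x y)) → Q (A.inf c x) ∨ Q (A.inf c y))
    (G₀ : Set A.carrier) (hG₀ : IsFilter A G₀) (hQ₀ : ∀ x ∈ G₀, Q x) :
    ∃ G : Set A.carrier, IsPrimeFilter A G ∧ G₀ ⊆ G ∧ ∀ x ∈ G, Q x := by
  classical
  set S : Set (Set A.carrier) := {G | IsFilter A G ∧ ∀ x ∈ G, Q x} with hS
  have hG₀S : G₀ ∈ S := ⟨hG₀, hQ₀⟩
  obtain ⟨G, hsub, hmax⟩ := zorn_subset_nonempty S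
    (by
      intro c hcS hchain hcne
      refine ⟨⋃₀ c, ⟨⟨?_, ?_, ?_⟩, ?_⟩, fun s hs => Set.subset_sUnion_of_mem hs⟩
      · obtain ⟨s, hs⟩ := hcne
        obtain ⟨x, hx⟩ := (hcS hs).1.1
        exact ⟨x, s, hs, hx⟩
      · rintro x y ⟨s, hs, hx⟩ hle
        exact ⟨s, hs, (hcS hs).1.2.1 x y hx hle⟩
      · rintro x y ⟨s, hs, hx⟩ ⟨t, ht, hy⟩
        rcases hchain.total hs ht with h | h
        · exact ⟨t, ht, (hcS ht).1.2.2 x y (h hx) hy⟩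
        · exact ⟨s, hs, (hcS hs).1.2.2 x y hx (h hy)⟩
      · rintro x ⟨s, hs, hx⟩
        exact (hcS hs).2 x hx)
    G₀ hG₀S
  have hGS : G ∈ S := hmax.1
  obtain ⟨⟨hne, hupc, hinfc⟩, hQG⟩ := hGS
  refine ⟨G, ⟨hne, hupc, hinfc, ?_, ?_⟩, hsub, hQG⟩
  · intro hb; exact hbot (hQG _ hb)
  · intro x y hxy
    by_contra hcon
    push_neg at hcon
    obtain ⟨hx, hy⟩ := hcon
    have ext : ∀ z : A.carrier, z ∉ G → ∃ g ∈ G, ¬ Q (A.inf g z) := by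
      intro z hz
      set Gz : Set A.carrier := {w | ∃ g ∈ G, A.le (A.inf g z) w} with hGz
      have hfil : IsFilter A Gz := by
        refine ⟨?_, ?_, ?_⟩
        · obtain ⟨g0, hg0⟩ := hne
          exact ⟨A.inf g0 z, g0, hg0, A.le_refl _⟩
        · rintro u v ⟨g, hg, hgu⟩ huv
          exact ⟨g, hg, A.le_trans _ _ _ hgu huv⟩
        · rintro u v ⟨g, hg, hgu⟩ ⟨g', hg', hgv⟩
          refine ⟨A.inf g g', hinfc _ _ hg hg', ?_⟩
          refine A.le_inf _ _ _ ?_ ?_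
          · exact A.le_trans _ _ _ (inf_mono (A.inf_le_left _ _) (A.le_refl z)) hgu
          · exact A.le_trans _ _ _ (inf_mono (A.inf_le_right _ _) (A.le_refl z)) hgv
      have hGsub : G ⊆ Gz := by
        intro g hg
        exact ⟨g, hg, A.inf_le_left _ _⟩
      have hzG : z ∈ Gz := by
        obtain ⟨g0, hg0⟩ := hne
        exact ⟨g0, hg0, A.inf_le_right _ _⟩
      have hGzS : Gz ∉ S := by
        intro hmem
        exact hz (hmax.2 hmem hGsub hzG)
      have : ¬ ∀ w ∈ Gz, Q w := fun hall => hGzS ⟨hfil, hall⟩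
      push_neg at this
      obtain ⟨w, ⟨g, hg, hgw⟩, hQw⟩ := this
      exact ⟨g, hg, fun hq => hQw (hup _ _ hq hgw)⟩
    obtain ⟨g1, hg1, hq1⟩ := ext x hx
    obtain ⟨g2, hg2, hq2⟩ := ext y hy
    set g := A.inf g1 g2 with hgdef
    have hgG : g ∈ G := hinfc _ _ hg1 hg2
    have hQg : Q (A.inf g (A.sup x y)) := hQG _ (hinfc _ _ hgG hxy)
    rcases hmp g x y hQg with h | h
    · exact hq1 (hup _ _ h (inf_mono (A.inf_le_left _ _) (A.le_refl x)))
    · exact hq2 (hup _ _ h (inf_mono (A.inf_le_right _ _) (A.le_refl y)))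

/-- Prime filter separation. -/
lemma primeSep (G₀ : Set A.carrier) (hG₀ : IsFilter A G₀) (b : A.carrier)
    (h : ∀ x ∈ G₀, ¬ A.le x b) :
    ∃ G : Set A.carrier, IsPrimeFilter A G ∧ G₀ ⊆ G ∧ b ∉ G := by
  obtain ⟨G, hG, hsub, hQ⟩ := primeExtension (fun y => ¬ A.le y b)
    (fun x y hx hxy hyb => hx (A.le_trans _ _ _ hxy hyb))
    (by simp only [not_not]; exact A.bot_le b)
    (by
      intro c x y hc
      by_contra hcon
      push_neg at hcon
      obtain ⟨h1, h2⟩ := hcon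
      exact hc (A.le_trans _ _ _ (distrib c x y) (A.sup_le _ _ _ h1 h2)))
    G₀ hG₀ h
  exact ⟨G, hG, hsub, fun hb => hQ b hb (A.le_refl b)⟩

/-- Squeeze lemma: extend the left argument of a residuated operation. -/
lemma squeeze (op : A.carrier → A.carrier → A.carrier)
    (hmono : ∀ a b c d, A.le a b → A.le c d → A.le (op a c) (op b d))
    (hsup : ∀ u v t, A.le (op (A.sup u v) t) (A.sup (op u t) (op v t)))
    (hbot : ∀ t, A.le (op A.bot t) A.bot)
    (F : Set A.carrier) (hF : IsPrimeFilter A F)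
    (T : Set A.carrier) (hT : IsFilter A T)
    (G₀ : Set A.carrier) (hG₀ : IsFilter A G₀)
    (h : ∀ x ∈ G₀, ∀ t ∈ T, op x t ∈ F) :
    ∃ G, IsPrimeFilter A G ∧ G₀ ⊆ G ∧ ∀ x ∈ G, ∀ t ∈ T, op x t ∈ F := by
  obtain ⟨hFne, hFup, hFinf, hFbot, hFpr⟩ := hF
  refine primeExtension (fun y => ∀ t ∈ T, op y t ∈ F) ?_ ?_ ?_ G₀ hG₀ h
  · intro x y hx hxy t ht
    exact hFup _ _ (hx t ht) (hmono _ _ _ _ hxy (A.le_refl t))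
  · intro hq
    obtain ⟨t0, ht0⟩ := hT.1
    exact hFbot (hFup _ _ (hq t0 ht0) (hbot t0))
  · intro c x y hc
    by_contra hcon
    rw [not_or] at hcon
    obtain ⟨h1', h2'⟩ := hcon
    have e1 : ∃ t ∈ T, op (A.inf c x) t ∉ F := by
      by_contra hh; push_neg at hh; exact h1' hh
    have e2 : ∃ t ∈ T, op (A.inf c y) t ∉ F := by
      by_contra hh; push_neg at hh; exact h2' hh
    obtain ⟨t1, ht1, h1⟩ := e1
    obtain ⟨t2, ht2, h2⟩ := e2

    have htt : A.inf t1 t2 ∈ T := hT.2.2 _ _ ht1 ht2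
    have hmem : op (A.inf c (A.sup x y)) (A.inf t1 t2) ∈ F := hc _ htt
    have hle : A.le (op (A.inf c (A.sup x y)) (A.inf t1 t2))
        (A.sup (op (A.inf c x) (A.inf t1 t2)) (op (A.inf c y) (A.inf t1 t2))) :=
      A.le_trans _ _ _ (hmono _ _ _ _ (distrib c x y) (A.le_refl _)) (hsup _ _ _)
    rcases hFpr _ _ (hFup _ _ hmem hle) with hm | hm
    · exact h1 (hFup _ _ hm (hmono _ _ _ _ (A.le_refl _) (A.inf_le_left _ _)))
    · exact h2 (hFup _ _ hm (hmono _ _ _ _ (A.le_refl _) (A.inf_le_right _ _)))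

/- Monotonicity and join-distributivity facts for sep and tri. -/
lemma sep_mono {a b c d : A.carrier} (h1 : A.le a b) (h2 : A.le c d) :
    A.le (A.sep a c) (A.sep b d) := by
  have s1 : A.le (A.sep a c) (A.sep b c) := by
    rw [A.wand_adj]
    exact A.le_trans _ _ _ h1 ((A.wand_adj b c _).mp (A.le_refl _))
  have s2 : A.le (A.sep b c) (A.sep b d) := by
    rw [A.sep_comm b c, A.sep_comm b d, A.wand_adj]
    exact A.le_trans _ _ _ h2 ((A.wand_adj d b _).mp (A.le_refl _))
  exact A.le_trans _ _ _ s1 s2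

lemma sep_sup_left (u v t : A.carrier) :
    A.le (A.sep (A.sup u v) t) (A.sup (A.sep u t) (A.sep v t)) := by
  rw [A.wand_adj]
  exact A.sup_le _ _ _
    ((A.wand_adj u t _).mp (A.le_sup_left _ _))
    ((A.wand_adj v t _).mp (A.le_sup_right _ _))

lemma sep_bot_left (t : A.carrier) : A.le (A.sep A.bot t) A.bot := by
  rw [A.wand_adj]; exact A.bot_le _

lemma tri_mono {a b c d : A.carrier} (h1 : A.le a b) (h2 : A.le c d) :
    A.le (A.tri a c) (A.tri b d) := by
  have s1 : A.le (A.tri a c) (A.tri b c) := by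
    rw [A.triimpR_adj]
    exact A.le_trans _ _ _ h1 ((A.triimpR_adj b c _).mp (A.le_refl _))
  have s2 : A.le (A.tri b c) (A.tri b d) := by
    rw [A.triimpL_adj]
    exact A.le_trans _ _ _ h2 ((A.triimpL_adj b d _).mp (A.le_refl _))
  exact A.le_trans _ _ _ s1 s2

lemma tri_sup_left (u v t : A.carrier) :
    A.le (A.tri (A.sup u v) t) (A.sup (A.tri u t) (A.tri v t)) := by
  rw [A.triimpR_adj]
  exact A.sup_le _ _ _
    ((A.triimpR_adj u t _).mp (A.le_sup_left _ _))
    ((A.triimpR_adj v t _).mp (A.le_sup_right _ _))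

lemma tri_sup_right (t u v : A.carrier) :
    A.le (A.tri t (A.sup u v)) (A.sup (A.tri t u) (A.tri t v)) := by
  rw [A.triimpL_adj]
  exact A.sup_le _ _ _
    ((A.triimpL_adj t u _).mp (A.le_sup_left _ _))
    ((A.triimpL_adj t v _).mp (A.le_sup_right _ _))

lemma tri_bot_left (t : A.carrier) : A.le (A.tri A.bot t) A.bot := by
  rw [A.triimpR_adj]; exact A.bot_le _

lemma tri_bot_right (t : A.carrier) : A.le (A.tri t A.bot) A.bot := by
  rw [A.triimpL_adj]; exact A.bot_le _

/-- Principal filter. -/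
lemma upset_filter (a : A.carrier) : IsFilter A {x | A.le a x} :=
  ⟨⟨a, A.le_refl a⟩, fun x y hx hxy => A.le_trans _ _ _ hx hxy,
    fun x y hx hy => A.le_inf _ _ _ hx hy⟩

/-- Product filter: upward closure of pointwise products. -/
lemma prodFilter (op : A.carrier → A.carrier → A.carrier)
    (hmono : ∀ a b c d, A.le a b → A.le c d → A.le (op a c) (op b d))
    (F G : Set A.carrier) (hF : IsFilter A F) (hG : IsFilter A G) :
    IsFilter A {z | ∃ x ∈ F, ∃ y ∈ G, A.le (op x y) z} := by
  refine ⟨?_, ?_, ?_⟩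
  · obtain ⟨x, hx⟩ := hF.1
    obtain ⟨y, hy⟩ := hG.1
    exact ⟨op x y, x, hx, y, hy, A.le_refl _⟩
  · rintro z w ⟨x, hx, y, hy, hle⟩ hzw
    exact ⟨x, hx, y, hy, A.le_trans _ _ _ hle hzw⟩
  · rintro z w ⟨x, hx, y, hy, hle⟩ ⟨x', hx', y', hy', hle'⟩
    refine ⟨A.inf x x', hF.2.2 _ _ hx hx', A.inf y y', hG.2.2 _ _ hy hy', ?_⟩
    refine A.le_inf _ _ _ ?_ ?_
    · exact A.le_trans _ _ _ (hmono _ _ _ _ (A.inf_le_left _ _) (A.inf_le_left _ _)) hle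
    · exact A.le_trans _ _ _ (hmono _ _ _ _ (A.inf_le_right _ _) (A.inf_le_right _ _)) hle'

lemma pf_filter {F : Set A.carrier} (hF : IsPrimeFilter A F) : IsFilter A F :=
  ⟨hF.1, hF.2.1, hF.2.2.1⟩

lemma sep_sup_right (t u v : A.carrier) :
    A.le (A.sep t (A.sup u v)) (A.sup (A.sep t u) (A.sep t v)) := by
  rw [A.sep_comm t (A.sup u v), A.sep_comm t u, A.sep_comm t v]
  exact sep_sup_left u v t

lemma sep_bot_right (t : A.carrier) : A.le (A.sep t A.bot) A.bot := by
  rw [A.sep_comm]; exact sep_bot_left t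

end DIBIRep


/-- **Representation theorem for DIBI algebras.** Every DIBI algebra `A` embeds into
the complex algebra of its prime filter frame: the map `θ_A(a) = {F ∈ PF_A : a ∈ F}`
lands in the upward-closed subsets of `Pr(A)`, is injective, and is a homomorphism of
DIBI algebras, preserving `∧, ∨, →, ⊤, ⊥, ∗, -∗, ▷, ▷→, ▷-` and the unit `I`. -/
theorem representation_theorem (A : DIBIAlg) :
    (∀ a, UpClosed (pfLe A) (theta A a)) ∧
    Function.Injective (theta A) ∧
    (∀ a b, theta A (A.inf a b) = theta A a ∩ theta A b) ∧
    (∀ a b, theta A (A.sup a b) = theta A a ∪ theta A b) ∧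
    (∀ a b, theta A (A.himp a b) = cHimp (pfLe A) (theta A a) (theta A b)) ∧
    theta A A.top = Set.univ ∧
    theta A A.bot = ∅ ∧
    (∀ a b, theta A (A.sep a b) = cSep (pfLe A) (pfOplus A) (theta A a) (theta A b)) ∧
    (∀ a b, theta A (A.wand a b) = cWand (pfOplus A) (theta A a) (theta A b)) ∧
    (∀ a b, theta A (A.tri a b) = cTri (pfOdot A) (theta A a) (theta A b)) ∧
    (∀ a b, theta A (A.triimpR a b) = cTriimpR (pfLe A) (pfOdot A) (theta A a) (theta A b)) ∧
    (∀ a b, theta A (A.triimpL a b) = cTriimpL (pfLe A) (pfOdot A) (theta A a) (theta A b)) ∧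
    theta A A.unit = pfE A := by
  classical
  open DIBIRep in
  refine ⟨?_, ?_, ?_, ?_, ?_, ?_, ?_, ?_, ?_, ?_, ?_, ?_, rfl⟩
  · -- upward closed
    intro a F G haF hFG
    exact hFG haF
  · -- injective
    have key : ∀ a b : A.carrier, theta A a ⊆ theta A b → A.le a b := by
      intro a b h
      by_contra hab
      obtain ⟨G, hG, hsub, hbG⟩ := primeSep {x | A.le a x} (upset_filter a) b
        (fun x hx hxb => hab (A.le_trans _ _ _ hx hxb))
      exact hbG (h (show (⟨G, hG⟩ : PF A) ∈ theta A a from hsub (A.le_refl a)))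
    intro a b hab
    exact A.le_antisymm _ _ (key a b (by rw [hab])) (key b a (by rw [hab]))
  · -- inf
    intro a b
    ext F
    constructor
    · intro h
      exact ⟨F.2.2.1 _ _ h (A.inf_le_left a b), F.2.2.1 _ _ h (A.inf_le_right a b)⟩
    · rintro ⟨h1, h2⟩
      exact F.2.2.2.1 _ _ h1 h2
  · -- sup
    intro a b
    ext F
    constructor
    · intro h
      exact F.2.2.2.2.2 _ _ h
    · rintro (h | h)
      · exact F.2.2.1 _ _ h (A.le_sup_left a b)
      · exact F.2.2.1 _ _ h (A.le_sup_right a b)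
  · -- himp
    intro a b
    ext F
    constructor
    · intro h G hFG haG
      have hm : A.inf (A.himp a b) a ∈ G.1 := G.2.2.2.1 _ _ (hFG h) haG
      exact G.2.2.1 _ _ hm ((A.himp_adj _ _ _).mpr (A.le_refl _))
    · intro h
      by_contra hni
      have hfil : IsFilter A {z | ∃ x ∈ F.1, ∃ y ∈ {x | A.le a x}, A.le (A.inf x y) z} :=
        prodFilter A.inf (fun _ _ _ _ => inf_mono) F.1 _ (pf_filter F.2) (upset_filter a)
      obtain ⟨G, hGp, hGsub, hbG⟩ := primeSep _ hfil b (by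
        rintro z ⟨x, hx, y, hy, hle⟩ hzb
        have : A.le (A.inf x a) b :=
          A.le_trans _ _ _ (inf_mono (A.le_refl x) hy) (A.le_trans _ _ _ hle hzb)
        exact hni (F.2.2.1 _ _ hx ((A.himp_adj x a b).mp this)))
      have hFG : pfLe A F ⟨G, hGp⟩ := by
        intro f hf
        obtain ⟨x0, hx0⟩ := F.2.1
        exact hGsub ⟨f, hf, a, A.le_refl a, A.inf_le_left _ _⟩
      have haG : a ∈ G := by
        obtain ⟨x0, hx0⟩ := F.2.1
        exact hGsub ⟨x0, hx0, a, A.le_refl a, A.inf_le_right _ _⟩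
      exact hbG (h ⟨G, hGp⟩ hFG haG)
  · -- top
    apply Set.eq_univ_of_forall
    intro F
    obtain ⟨x, hx⟩ := F.2.1
    exact F.2.2.1 _ _ hx (A.le_top x)
  · -- bot
    apply Set.eq_empty_iff_forall_notMem.mpr
    intro F h
    exact F.2.2.2.2.1 h
  · -- sep
    intro a b
    ext F
    constructor
    · intro h
      obtain ⟨G, hGp, hGsub, hG⟩ := squeeze A.sep (fun _ _ _ _ => sep_mono)
        sep_sup_left sep_bot_left F.1 F.2 {x | A.le b x} (upset_filter b)
        {x | A.le a x} (upset_filter a)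
        (fun x hx t ht => F.2.2.1 _ _ h (sep_mono hx ht))
      obtain ⟨H, hHp, hHsub, hH⟩ := squeeze (fun x y => A.sep y x)
        (fun _ _ _ _ h1 h2 => sep_mono h2 h1)
        (fun u v t => sep_sup_right t u v) (fun t => sep_bot_right t)
        F.1 F.2 G (pf_filter hGp) {x | A.le b x} (upset_filter b)
        (fun y hy x hx => hG x hx y hy)
      exact ⟨F, ⟨G, hGp⟩, ⟨H, hHp⟩, fun z hz => hz,
        fun x hx y hy => hH y hy x hx, hGsub (A.le_refl a), hHsub (A.le_refl b)⟩
    · rintro ⟨F', G, H, hle, hop, ha, hb⟩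
      exact hle (hop a ha b hb)
  · -- wand
    intro a b
    ext F
    constructor
    · intro h G H hmem haG
      exact H.2.2.1 _ _ (hmem _ h _ haG) ((A.wand_adj _ a b).mpr (A.le_refl _))
    · intro h
      by_contra hni
      have hfil : IsFilter A {z | ∃ x ∈ F.1, ∃ y ∈ {x | A.le a x}, A.le (A.sep x y) z} :=
        prodFilter A.sep (fun _ _ _ _ => sep_mono) F.1 _ (pf_filter F.2) (upset_filter a)
      obtain ⟨H, hHp, hHsub, hbH⟩ := primeSep _ hfil b (by
        rintro z ⟨x, hx, y, hy, hle⟩ hzb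
        have : A.le (A.sep x a) b :=
          A.le_trans _ _ _ (sep_mono (A.le_refl x) hy) (A.le_trans _ _ _ hle hzb)
        exact hni (F.2.2.1 _ _ hx ((A.wand_adj x a b).mp this)))
      obtain ⟨G, hGp, hGsub, hG⟩ := squeeze (fun x y => A.sep y x)
        (fun _ _ _ _ h1 h2 => sep_mono h2 h1)
        (fun u v t => sep_sup_right t u v) (fun t => sep_bot_right t)
        H hHp F.1 (pf_filter F.2) {x | A.le a x} (upset_filter a)
        (fun y hy x hx => hHsub ⟨x, hx, y, hy, A.le_refl _⟩)
      exact hbH (h ⟨G, hGp⟩ ⟨H, hHp⟩ (fun x hx y hy => hG y hy x hx)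
        (hGsub (A.le_refl a)))
  · -- tri
    intro a b
    ext F
    constructor
    · intro h
      obtain ⟨G, hGp, hGsub, hG⟩ := squeeze A.tri (fun _ _ _ _ => tri_mono)
        tri_sup_left tri_bot_left F.1 F.2 {x | A.le b x} (upset_filter b)
        {x | A.le a x} (upset_filter a)
        (fun x hx t ht => F.2.2.1 _ _ h (tri_mono hx ht))
      obtain ⟨H, hHp, hHsub, hH⟩ := squeeze (fun x y => A.tri y x)
        (fun _ _ _ _ h1 h2 => tri_mono h2 h1)
        (fun u v t => tri_sup_right t u v) (fun t => tri_bot_right t)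
        F.1 F.2 G (pf_filter hGp) {x | A.le b x} (upset_filter b)
        (fun y hy x hx => hG x hx y hy)
      exact ⟨⟨G, hGp⟩, ⟨H, hHp⟩, fun x hx y hy => hH y hy x hx,
        hGsub (A.le_refl a), hHsub (A.le_refl b)⟩
    · rintro ⟨G, H, hop, ha, hb⟩
      exact hop a ha b hb
  · -- triimpR
    intro a b
    ext F
    constructor
    · intro h F' G H hle hmem haG
      exact H.2.2.1 _ _ (hmem _ (hle h) _ haG) ((A.triimpR_adj _ a b).mpr (A.le_refl _))
    · intro h
      by_contra hni
      have hfil : IsFilter A {z | ∃ x ∈ F.1, ∃ y ∈ {x | A.le a x}, A.le (A.tri x y) z} :=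
        prodFilter A.tri (fun _ _ _ _ => tri_mono) F.1 _ (pf_filter F.2) (upset_filter a)
      obtain ⟨H, hHp, hHsub, hbH⟩ := primeSep _ hfil b (by
        rintro z ⟨x, hx, y, hy, hle⟩ hzb
        have : A.le (A.tri x a) b :=
          A.le_trans _ _ _ (tri_mono (A.le_refl x) hy) (A.le_trans _ _ _ hle hzb)
        exact hni (F.2.2.1 _ _ hx ((A.triimpR_adj x a b).mp this)))
      obtain ⟨F', hF'p, hF'sub, hF'⟩ := squeeze A.tri (fun _ _ _ _ => tri_mono)
        tri_sup_left tri_bot_left H hHp {x | A.le a x} (upset_filter a)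
        F.1 (pf_filter F.2)
        (fun x hx t ht => hHsub ⟨x, hx, t, ht, A.le_refl _⟩)
      obtain ⟨G, hGp, hGsub, hG⟩ := squeeze (fun x y => A.tri y x)
        (fun _ _ _ _ h1 h2 => tri_mono h2 h1)
        (fun u v t => tri_sup_right t u v) (fun t => tri_bot_right t)
        H hHp F' (pf_filter hF'p) {x | A.le a x} (upset_filter a)
        (fun y hy x hx => hF' x hx y hy)
      exact hbH (h ⟨F', hF'p⟩ ⟨G, hGp⟩ ⟨H, hHp⟩ hF'sub
        (fun x hx y hy => hG y hy x hx) (hGsub (A.le_refl a)))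
  · -- triimpL
    intro a b
    ext F
    constructor
    · intro h F' G H hle hmem haG
      exact H.2.2.1 _ _ (hmem _ haG _ (hle h)) ((A.triimpL_adj a _ b).mpr (A.le_refl _))
    · intro h
      by_contra hni
      have hfil : IsFilter A {z | ∃ y ∈ {x | A.le a x}, ∃ x ∈ F.1, A.le (A.tri y x) z} :=
        prodFilter A.tri (fun _ _ _ _ => tri_mono) _ F.1 (upset_filter a) (pf_filter F.2)
      obtain ⟨H, hHp, hHsub, hbH⟩ := primeSep _ hfil b (by
        rintro z ⟨y, hy, x, hx, hle⟩ hzb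
        have : A.le (A.tri a x) b :=
          A.le_trans _ _ _ (tri_mono hy (A.le_refl x)) (A.le_trans _ _ _ hle hzb)
        exact hni (F.2.2.1 _ _ hx ((A.triimpL_adj a x b).mp this)))
      obtain ⟨F', hF'p, hF'sub, hF'⟩ := squeeze (fun x y => A.tri y x)
        (fun _ _ _ _ h1 h2 => tri_mono h2 h1)
        (fun u v t => tri_sup_right t u v) (fun t => tri_bot_right t)
        H hHp {x | A.le a x} (upset_filter a) F.1 (pf_filter F.2)
        (fun x hx t ht => hHsub ⟨t, ht, x, hx, A.le_refl _⟩)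
      obtain ⟨G, hGp, hGsub, hG⟩ := squeeze A.tri (fun _ _ _ _ => tri_mono)
        tri_sup_left tri_bot_left H hHp F' (pf_filter hF'p)
        {x | A.le a x} (upset_filter a)
        (fun y hy x hx => hF' x hx y hy)
      exact hbH (h ⟨F', hF'p⟩ ⟨G, hGp⟩ ⟨H, hHp⟩ hF'sub
        (fun x hx y hy => hG x hx y hy) (hGsub (A.le_refl a)))
end

section
/- Soundness and completeness of DIBI with respect to its Kripke semantics: for all DIBI formulas P and Q, the sequent P ⊢ Q is derivable in the DIBI Hilbert system if and only if P ⊨ Q, where P ⊨ Q means that for every DIBI frame with persistent valuation, if P is satisfied at every state then Q is satisfied at every state (equivalently, every state satisfying P satisfies Q). -/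
/-- The DIBI Hilbert system: derivability of sequents `P ⊢ Q`. -/
inductive Deriv {AP : Type*} : Formula AP → Formula AP → Prop where
  -- intuitionistic rules
  | ax (P : Formula AP) : Deriv P P
  | top_right (P : Formula AP) : Deriv P .top
  | bot_left (P : Formula AP) : Deriv .bot P
  | or_left {P Q R : Formula AP} : Deriv P R → Deriv Q R → Deriv (.or P Q) R
  | or_right1 {P Q1 : Formula AP} (Q2 : Formula AP) : Deriv P Q1 → Deriv P (.or Q1 Q2)
  | or_right2 {P Q2 : Formula AP} (Q1 : Formula AP) : Deriv P Q2 → Deriv P (.or Q1 Q2)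
  | and_right {P Q R : Formula AP} : Deriv P Q → Deriv P R → Deriv P (.and Q R)
  | and_left {Q R : Formula AP} (P : Formula AP) : Deriv Q R → Deriv (.and P Q) R
  | and_elim1 {P Q1 Q2 : Formula AP} : Deriv P (.and Q1 Q2) → Deriv P Q1
  | and_elim2 {P Q1 Q2 : Formula AP} : Deriv P (.and Q1 Q2) → Deriv P Q2
  | imp_intro {P Q R : Formula AP} : Deriv (.and P Q) R → Deriv P (.imp Q R)
  | mp {P Q R : Formula AP} : Deriv P (.imp Q R) → Deriv P Q → Deriv P R
  -- adjunction and modus ponens rules for -∗, ▷→, ▷-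
  | wand_intro {P Q R : Formula AP} : Deriv (.sep P Q) R → Deriv P (.wand Q R)
  | wand_mp {P Q R S : Formula AP} : Deriv P (.wand Q R) → Deriv S Q → Deriv (.sep P S) R
  | triimpR_intro {P Q R : Formula AP} : Deriv (.tri P Q) R → Deriv P (.triimpR Q R)
  | triimpR_mp {P Q R S : Formula AP} : Deriv P (.triimpR Q R) → Deriv S Q → Deriv (.tri P S) R
  | triimpL_intro {P Q R : Formula AP} : Deriv (.tri P Q) R → Deriv Q (.triimpL P R)
  | triimpL_mp {P Q R S : Formula AP} : Deriv P (.triimpL Q R) → Deriv S Q → Deriv (.tri S P) R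
  -- (∗, I) is a commutative monoid up to interderivability
  | sep_unit1 (P : Formula AP) : Deriv P (.sep P .emp)
  | sep_unit2 (P : Formula AP) : Deriv (.sep P .emp) P
  | sep_conj {P Q R S : Formula AP} : Deriv P R → Deriv Q S → Deriv (.sep P Q) (.sep R S)
  | sep_comm (P Q : Formula AP) : Deriv (.sep P Q) (.sep Q P)
  | sep_assoc1 (P Q R : Formula AP) : Deriv (.sep (.sep P Q) R) (.sep P (.sep Q R))
  | sep_assoc2 (P Q R : Formula AP) : Deriv (.sep P (.sep Q R)) (.sep (.sep P Q) R)
  -- rules for ▷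
  | tri_left_unit (P : Formula AP) : Deriv P (.tri .emp P)
  | tri_right_unit1 (P : Formula AP) : Deriv P (.tri P .emp)
  | tri_right_unit2 (P : Formula AP) : Deriv (.tri P .emp) P
  | tri_conj {P Q R S : Formula AP} : Deriv P R → Deriv Q S → Deriv (.tri P Q) (.tri R S)
  | tri_assoc1 (P Q R : Formula AP) : Deriv (.tri (.tri P Q) R) (.tri P (.tri Q R))
  | tri_assoc2 (P Q R : Formula AP) : Deriv (.tri P (.tri Q R)) (.tri (.tri P Q) R)
  -- reverse exchange
  | rev_ex (P Q R S : Formula AP) :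
      Deriv (.sep (.tri P Q) (.tri R S)) (.tri (.sep P R) (.sep Q S))
section DIBIAux

variable {AP : Type}

/-! ### Derived rules of the Hilbert system -/

theorem Deriv.cut {P Q R : Formula AP} (h1 : Deriv P Q) (h2 : Deriv Q R) : Deriv P R :=
  .mp (.imp_intro (.and_left P h2)) h1

theorem Deriv.and1 (P Q : Formula AP) : Deriv (.and P Q) P := .and_elim1 (.ax _)

theorem Deriv.and2 (P Q : Formula AP) : Deriv (.and P Q) Q := .and_elim2 (.ax _)

theorem Deriv.and_mono {a a' b b' : Formula AP} (h1 : Deriv a a') (h2 : Deriv b b') :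
    Deriv (.and a b) (.and a' b') :=
  .and_right ((Deriv.and1 a b).cut h1) ((Deriv.and2 a b).cut h2)

theorem Deriv.and_or_distrib (P Q R : Formula AP) :
    Deriv (.and P (.or Q R)) (.or (.and P Q) (.and P R)) := by
  have swap : ∀ A B : Formula AP, Deriv (.and A B) (.and B A) :=
    fun A B => .and_right (Deriv.and2 A B) (Deriv.and1 A B)
  have hQ : Deriv Q (.imp P (.or (.and P Q) (.and P R))) :=
    .imp_intro (.or_right1 _ (swap Q P))
  have hR : Deriv R (.imp P (.or (.and P Q) (.and P R))) :=
    .imp_intro (.or_right2 _ (swap R P))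
  exact .mp ((Deriv.and2 P (.or Q R)).cut (.or_left hQ hR)) (Deriv.and1 P _)

theorem Deriv.sep_or_left (a a' b : Formula AP) :
    Deriv (.sep (.or a a') b) (.or (.sep a b) (.sep a' b)) :=
  .wand_mp (.or_left (.wand_intro (.or_right1 _ (.ax _)))
    (.wand_intro (.or_right2 _ (.ax _)))) (.ax b)

theorem Deriv.sep_or_right (a b b' : Formula AP) :
    Deriv (.sep a (.or b b')) (.or (.sep a b) (.sep a b')) :=
  ((Deriv.sep_comm a _).cut (Deriv.sep_or_left b b' a)).cut
    (.or_left (.or_right1 _ (.sep_comm _ _)) (.or_right2 _ (.sep_comm _ _)))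

theorem Deriv.sep_bot_left (b : Formula AP) : Deriv (.sep .bot b) .bot :=
  .wand_mp (.bot_left _) (.ax b)

theorem Deriv.sep_bot_right (a : Formula AP) : Deriv (.sep a .bot) .bot :=
  (Deriv.sep_comm _ _).cut (Deriv.sep_bot_left a)

theorem Deriv.tri_or_left (a a' b : Formula AP) :
    Deriv (.tri (.or a a') b) (.or (.tri a b) (.tri a' b)) :=
  .triimpR_mp (.or_left (.triimpR_intro (.or_right1 _ (.ax _)))
    (.triimpR_intro (.or_right2 _ (.ax _)))) (.ax b)

theorem Deriv.tri_or_right (a b b' : Formula AP) :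
    Deriv (.tri a (.or b b')) (.or (.tri a b) (.tri a b')) :=
  .triimpL_mp (.or_left (.triimpL_intro (.or_right1 _ (.ax _)))
    (.triimpL_intro (.or_right2 _ (.ax _)))) (.ax a)

theorem Deriv.tri_bot_left (b : Formula AP) : Deriv (.tri .bot b) .bot :=
  .triimpR_mp (.bot_left _) (.ax b)

theorem Deriv.tri_bot_right (a : Formula AP) : Deriv (.tri a .bot) .bot :=
  .triimpL_mp (.bot_left _) (.ax a)

end DIBIAux
section DIBITheories

variable {AP : Type}

/-- A theory: a set of formulas closed under consequence and conjunction, containing ⊤. -/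
structure IsTheory (T : Set (Formula AP)) : Prop where
  closed : ∀ {φ ψ : Formula AP}, φ ∈ T → Deriv φ ψ → ψ ∈ T
  conj : ∀ {φ ψ : Formula AP}, φ ∈ T → ψ ∈ T → Formula.and φ ψ ∈ T
  top_mem : Formula.top ∈ T

/-- A prime theory: a proper theory where disjunction is prime. -/
structure IsPrime (T : Set (Formula AP)) extends IsTheory T : Prop where
  bot_not_mem : Formula.bot ∉ T
  prime : ∀ {φ ψ : Formula AP}, Formula.or φ ψ ∈ T → φ ∈ T ∨ ψ ∈ T

/-- The theory generated by a single formula. -/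
def genF (P : Formula AP) : Set (Formula AP) := {χ | Deriv P χ}

theorem isTheory_genF (P : Formula AP) : IsTheory (genF P) :=
  ⟨fun h1 h2 => h1.cut h2, fun h1 h2 => .and_right h1 h2, .top_right P⟩

theorem self_mem_genF (P : Formula AP) : P ∈ genF P := .ax P

/-- Pairwise closure of two sets under a binary connective. -/
def pwSet (f : Formula AP → Formula AP → Formula AP) (A B : Set (Formula AP)) :
    Set (Formula AP) := {χ | ∃ a ∈ A, ∃ b ∈ B, Deriv (f a b) χ}

theorem isTheory_pwSet {f : Formula AP → Formula AP → Formula AP}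
    (fmono : ∀ {a a' b b'}, Deriv a a' → Deriv b b' → Deriv (f a b) (f a' b'))
    {A B : Set (Formula AP)} (hA : IsTheory A) (hB : IsTheory B) :
    IsTheory (pwSet f A B) := by
  refine ⟨?_, ?_, ?_⟩
  · rintro φ ψ ⟨a, ha, b, hb, hd⟩ h
    exact ⟨a, ha, b, hb, hd.cut h⟩
  · rintro φ ψ ⟨a, ha, b, hb, hd⟩ ⟨a', ha', b', hb', hd'⟩
    refine ⟨a.and a', hA.conj ha ha', b.and b', hB.conj hb hb', ?_⟩
    exact .and_right ((fmono (Deriv.and1 a a') (Deriv.and1 b b')).cut hd)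
      ((fmono (Deriv.and2 a a') (Deriv.and2 b b')).cut hd')
  · exact ⟨.top, hA.top_mem, .top, hB.top_mem, .top_right _⟩

theorem mem_pwSet_base {f : Formula AP → Formula AP → Formula AP}
    {A B : Set (Formula AP)} {a b : Formula AP} (ha : a ∈ A) (hb : b ∈ B) :
    f a b ∈ pwSet f A B := ⟨a, ha, b, hb, .ax _⟩

/-- Union of a nonempty chain of theories is a theory. -/
theorem isTheory_sUnion_chain {c : Set (Set (Formula AP))}
    (hc : IsChain (· ⊆ ·) c) (hne : c.Nonempty) (hth : ∀ T ∈ c, IsTheory T) :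
    IsTheory (⋃₀ c) := by
  refine ⟨?_, ?_, ?_⟩
  · rintro φ ψ ⟨T, hT, hφ⟩ h
    exact ⟨T, hT, (hth T hT).closed hφ h⟩
  · rintro φ ψ ⟨T, hT, hφ⟩ ⟨T', hT', hψ⟩
    rcases hc.total hT hT' with h | h
    · exact ⟨T', hT', (hth T' hT').conj (h hφ) hψ⟩
    · exact ⟨T, hT, (hth T hT).conj hφ (h hψ)⟩
  · obtain ⟨T, hT⟩ := hne
    exact ⟨T, hT, (hth T hT).top_mem⟩

/-- Prime extension lemma: a theory avoiding `ψ` extends to a prime theory avoiding `ψ`. -/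
theorem prime_extension {T : Set (Formula AP)} (hT : IsTheory T) {ψ : Formula AP}
    (hψ : ψ ∉ T) : ∃ Δ, IsPrime Δ ∧ T ⊆ Δ ∧ ψ ∉ Δ := by
  classical
  set S : Set (Set (Formula AP)) := {A | IsTheory A ∧ ψ ∉ A} with hS
  have hchainS : ∀ c ⊆ S, IsChain (· ⊆ ·) c → c.Nonempty →
      ∃ ub ∈ S, ∀ s ∈ c, s ⊆ ub := by
    intro c hcS hchain hcne
    refine ⟨⋃₀ c, ⟨isTheory_sUnion_chain hchain hcne (fun T hT => (hcS hT).1), ?_⟩,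
      fun s hs => Set.subset_sUnion_of_mem hs⟩
    rintro ⟨A, hA, hψA⟩
    exact (hcS hA).2 hψA
  obtain ⟨M, hTM, hM⟩ := zorn_subset_nonempty S hchainS T ⟨hT, hψ⟩
  · obtain ⟨hMth, hMψ⟩ := hM.prop
    have hmax : ∀ A, IsTheory A → ψ ∉ A → M ⊆ A → A ⊆ M := fun A h1 h2 h3 =>
      hM.2 ⟨h1, h2⟩ h3
    -- key: if φ ∉ M then adjoining φ forces ψ
    have key : ∀ φ, φ ∉ M → ∃ m ∈ M, Deriv (m.and φ) ψ := by
      intro φ hφ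
      by_contra hcon
      push_neg at hcon
      have hM1 : IsTheory (pwSet Formula.and M (genF φ)) :=
        isTheory_pwSet (fun h1 h2 => Deriv.and_mono h1 h2) hMth (isTheory_genF φ)
      have hsub : M ⊆ pwSet Formula.and M (genF φ) := fun m hm =>
        ⟨m, hm, .top, .top_right φ, Deriv.and1 m .top⟩
      have hψ1 : ψ ∉ pwSet Formula.and M (genF φ) := by
        rintro ⟨m, hm, b, hb, hd⟩
        exact hcon m hm (((Deriv.and_mono (.ax m) hb)).cut hd)
      have := hmax _ hM1 hψ1 hsub
      exact hφ (this ⟨.top, hMth.top_mem, φ, .ax φ, Deriv.and2 _ _⟩)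
    refine ⟨M, ⟨hMth, ?_, ?_⟩, hTM, hMψ⟩
    · intro hbot
      exact hMψ (hMth.closed hbot (.bot_left ψ))
    · intro φ φ' hor
      by_contra hcon
      push_neg at hcon
      obtain ⟨m, hm, hd⟩ := key φ hcon.1
      obtain ⟨m', hm', hd'⟩ := key φ' hcon.2
      have h1 : Deriv ((m.and m').and φ) ψ := (Deriv.and_mono (Deriv.and1 m m') (.ax φ)).cut hd
      have h2 : Deriv ((m.and m').and φ') ψ := (Deriv.and_mono (Deriv.and2 m m') (.ax φ')).cut hd'
      have hmem : (m.and m').and (φ.or φ') ∈ M := hMth.conj (hMth.conj hm hm') hor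
      exact hMψ (hMth.closed hmem ((Deriv.and_or_distrib _ _ _).cut (.or_left h1 h2)))

/-- Prime extension lemma for a pairwise product constraint, extending the left argument. -/
theorem prime_extension_pw (f : Formula AP → Formula AP → Formula AP)
    (fmono : ∀ {a a' b b'}, Deriv a a' → Deriv b b' → Deriv (f a b) (f a' b'))
    (fdist : ∀ a a' b, Deriv (f (.or a a') b) (.or (f a b) (f a' b)))
    (fbot : ∀ b, Deriv (f .bot b) .bot)
    {w B A0 : Set (Formula AP)} (hw : IsPrime w) (hB : IsTheory B) (hA0 : IsTheory A0)
    (h : ∀ a ∈ A0, ∀ b ∈ B, f a b ∈ w) :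
    ∃ A, IsPrime A ∧ A0 ⊆ A ∧ ∀ a ∈ A, ∀ b ∈ B, f a b ∈ w := by
  classical
  set S : Set (Set (Formula AP)) := {A | IsTheory A ∧ ∀ a ∈ A, ∀ b ∈ B, f a b ∈ w} with hS
  have hchainS : ∀ c ⊆ S, IsChain (· ⊆ ·) c → c.Nonempty →
      ∃ ub ∈ S, ∀ s ∈ c, s ⊆ ub := by
    intro c hcS hchain hcne
    refine ⟨⋃₀ c, ⟨isTheory_sUnion_chain hchain hcne (fun T hT => (hcS hT).1), ?_⟩,
      fun s hs => Set.subset_sUnion_of_mem hs⟩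
    rintro a ⟨A, hA, haA⟩ b hb
    exact (hcS hA).2 a haA b hb
  obtain ⟨M, hTM, hM⟩ := zorn_subset_nonempty S hchainS A0 ⟨hA0, h⟩
  · obtain ⟨hMth, hMw⟩ := hM.prop
    have hmax : ∀ A, IsTheory A → (∀ a ∈ A, ∀ b ∈ B, f a b ∈ w) → M ⊆ A → A ⊆ M :=
      fun A h1 h2 h3 => hM.2 ⟨h1, h2⟩ h3
    have key : ∀ φ, φ ∉ M → ∃ m ∈ M, ∃ b ∈ B, f (m.and φ) b ∉ w := by
      intro φ hφ
      by_contra hcon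
      push_neg at hcon
      have hM1 : IsTheory (pwSet Formula.and M (genF φ)) :=
        isTheory_pwSet (fun h1 h2 => Deriv.and_mono h1 h2) hMth (isTheory_genF φ)
      have hsub : M ⊆ pwSet Formula.and M (genF φ) := fun m hm =>
        ⟨m, hm, .top, .top_right φ, Deriv.and1 m .top⟩
      have hprop : ∀ a ∈ pwSet Formula.and M (genF φ), ∀ b ∈ B, f a b ∈ w := by
        rintro a ⟨m, hm, b', hb', hd⟩ b hb
        have h1 : Deriv (m.and φ) a := (Deriv.and_mono (.ax m) hb').cut hd
        exact hw.closed (hcon m hm b hb) (fmono h1 (.ax b))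
      have := hmax _ hM1 hprop hsub
      exact hφ (this ⟨.top, hMth.top_mem, φ, .ax φ, Deriv.and2 _ _⟩)
    refine ⟨M, ⟨hMth, ?_, ?_⟩, hTM, hMw⟩
    · intro hbot
      have := hMw .bot hbot .top hB.top_mem
      exact hw.bot_not_mem (hw.closed this (fbot .top))
    · intro φ φ' hor
      by_contra hcon
      push_neg at hcon
      obtain ⟨m, hm, b, hb, hd⟩ := key φ hcon.1
      obtain ⟨m', hm', b', hb', hd'⟩ := key φ' hcon.2
      set m'' := m.and m'
      set b'' := b.and b'
      have h1 : f (m''.and φ) b'' ∉ w := fun hmem => hd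
        (hw.closed hmem (fmono (Deriv.and_mono (Deriv.and1 m m') (.ax φ)) (Deriv.and1 b b')))
      have h2 : f (m''.and φ') b'' ∉ w := fun hmem => hd'
        (hw.closed hmem (fmono (Deriv.and_mono (Deriv.and2 m m') (.ax φ')) (Deriv.and2 b b')))
      have hmem : f (m''.and (φ.or φ')) b'' ∈ w :=
        hMw _ (hMth.conj (hMth.conj hm hm') hor) _ (hB.conj hb hb')
      have hdisj : ((f (m''.and φ) b'').or (f (m''.and φ') b'')) ∈ w :=
        hw.closed hmem ((fmono (Deriv.and_or_distrib _ _ _) (.ax b'')).cut (fdist _ _ _))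
      rcases hw.prime hdisj with hh | hh
      · exact h1 hh
      · exact h2 hh

/-- Prime extension lemma, extending the right argument of the pairwise product. -/
theorem prime_extension_pw_right (f : Formula AP → Formula AP → Formula AP)
    (fmono : ∀ {a a' b b'}, Deriv a a' → Deriv b b' → Deriv (f a b) (f a' b'))
    (fdist : ∀ a b b', Deriv (f a (.or b b')) (.or (f a b) (f a b')))
    (fbot : ∀ a, Deriv (f a .bot) .bot)
    {w A B0 : Set (Formula AP)} (hw : IsPrime w) (hA : IsTheory A) (hB0 : IsTheory B0)
    (h : ∀ a ∈ A, ∀ b ∈ B0, f a b ∈ w) :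
    ∃ B, IsPrime B ∧ B0 ⊆ B ∧ ∀ a ∈ A, ∀ b ∈ B, f a b ∈ w := by
  obtain ⟨B, hB, hB0B, hprop⟩ := prime_extension_pw (fun b a => f a b)
    (fun h1 h2 => fmono h2 h1) (fun a a' b => fdist b a a') (fun b => fbot b)
    hw hA hB0 (fun b hb a ha => h a ha b hb)
  exact ⟨B, hB, hB0B, fun a ha b hb => hprop b hb a ha⟩

end DIBITheories
section DIBICanon

variable {AP : Type}

/-- States of the canonical model: prime theories. -/
def PrimeTh (AP : Type) := {Γ : Set (Formula AP) // IsPrime Γ}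

def cle : PrimeTh AP → PrimeTh AP → Prop := fun Γ Δ => Γ.1 ⊆ Δ.1

def coplus : PrimeTh AP → PrimeTh AP → Set (PrimeTh AP) :=
  fun Δ Θ => {Γ | ∀ a ∈ Δ.1, ∀ b ∈ Θ.1, Formula.sep a b ∈ Γ.1}

def codot : PrimeTh AP → PrimeTh AP → Set (PrimeTh AP) :=
  fun Δ Θ => {Γ | ∀ a ∈ Δ.1, ∀ b ∈ Θ.1, Formula.tri a b ∈ Γ.1}

def cE : Set (PrimeTh AP) := {Γ | Formula.emp ∈ Γ.1}

/-- Specialization of the left prime-extension lemma to ∗. -/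
theorem pe_sep_left {w B A0 : Set (Formula AP)} (hw : IsPrime w) (hB : IsTheory B)
    (hA0 : IsTheory A0) (h : ∀ a ∈ A0, ∀ b ∈ B, Formula.sep a b ∈ w) :
    ∃ A, IsPrime A ∧ A0 ⊆ A ∧ ∀ a ∈ A, ∀ b ∈ B, Formula.sep a b ∈ w :=
  prime_extension_pw Formula.sep (fun h1 h2 => .sep_conj h1 h2) Deriv.sep_or_left
    Deriv.sep_bot_left hw hB hA0 h

theorem pe_sep_right {w A B0 : Set (Formula AP)} (hw : IsPrime w) (hA : IsTheory A)
    (hB0 : IsTheory B0) (h : ∀ a ∈ A, ∀ b ∈ B0, Formula.sep a b ∈ w) :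
    ∃ B, IsPrime B ∧ B0 ⊆ B ∧ ∀ a ∈ A, ∀ b ∈ B, Formula.sep a b ∈ w :=
  prime_extension_pw_right Formula.sep (fun h1 h2 => .sep_conj h1 h2) Deriv.sep_or_right
    Deriv.sep_bot_right hw hA hB0 h

theorem pe_tri_left {w B A0 : Set (Formula AP)} (hw : IsPrime w) (hB : IsTheory B)
    (hA0 : IsTheory A0) (h : ∀ a ∈ A0, ∀ b ∈ B, Formula.tri a b ∈ w) :
    ∃ A, IsPrime A ∧ A0 ⊆ A ∧ ∀ a ∈ A, ∀ b ∈ B, Formula.tri a b ∈ w :=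
  prime_extension_pw Formula.tri (fun h1 h2 => .tri_conj h1 h2) Deriv.tri_or_left
    Deriv.tri_bot_left hw hB hA0 h

theorem pe_tri_right {w A B0 : Set (Formula AP)} (hw : IsPrime w) (hA : IsTheory A)
    (hB0 : IsTheory B0) (h : ∀ a ∈ A, ∀ b ∈ B0, Formula.tri a b ∈ w) :
    ∃ B, IsPrime B ∧ B0 ⊆ B ∧ ∀ a ∈ A, ∀ b ∈ B, Formula.tri a b ∈ w :=
  prime_extension_pw_right Formula.tri (fun h1 h2 => .tri_conj h1 h2) Deriv.tri_or_right
    Deriv.tri_bot_right hw hA hB0 h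

theorem isTheory_pwSep {A B : Set (Formula AP)} (hA : IsTheory A) (hB : IsTheory B) :
    IsTheory (pwSet Formula.sep A B) :=
  isTheory_pwSet (fun h1 h2 => .sep_conj h1 h2) hA hB

theorem isTheory_pwTri {A B : Set (Formula AP)} (hA : IsTheory A) (hB : IsTheory B) :
    IsTheory (pwSet Formula.tri A B) :=
  isTheory_pwSet (fun h1 h2 => .tri_conj h1 h2) hA hB

theorem canon_frame : IsDIBIFrame (cle (AP := AP)) coplus codot cE := by
  constructor
  -- le_refl
  · exact fun x => subset_refl _
  -- le_trans
  · exact fun x y z h1 h2 => h1.trans h2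
  -- oplus_down
  · intro x y z x' y' hz hx' hy'
    exact ⟨z, subset_refl _, fun a ha b hb => hz a (hx' ha) b (hy' hb)⟩
  -- odot_up
  · intro x y z z' hz hzz'
    exact ⟨x, y, subset_refl _, subset_refl _, fun a ha b hb => hzz' (hz a ha b hb)⟩
  -- oplus_comm
  · intro x y z hz a ha b hb
    exact z.2.closed (hz b hb a ha) (.sep_comm b a)
  -- oplus_assoc
  · intro x y z t w hw ht
    have hbase : ∀ a ∈ x.1, ∀ d ∈ pwSet Formula.sep y.1 z.1, Formula.sep a d ∈ w.1 := by
      rintro a ha d ⟨b, hb, c, hc, hd⟩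
      have h1 : Formula.sep (Formula.sep a b) c ∈ w.1 := hw _ (ht a ha b hb) c hc
      exact w.2.closed h1 ((Deriv.sep_assoc1 a b c).cut (.sep_conj (.ax a) hd))
    obtain ⟨s, hs, hs0, hprop⟩ := pe_sep_right w.2 x.2.toIsTheory
      (isTheory_pwSep y.2.toIsTheory z.2.toIsTheory) hbase
    exact ⟨⟨s, hs⟩, fun b hb c hc => hs0 (mem_pwSet_base hb hc),
      fun a ha d hd => hprop a ha d hd⟩
  -- oplus_unit_exists
  · intro x
    have hbase : ∀ a ∈ genF (Formula.emp : Formula AP), ∀ b ∈ x.1,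
        Formula.sep a b ∈ x.1 := by
      intro a ha b hb
      exact x.2.closed hb ((Deriv.sep_unit1 b).cut ((Deriv.sep_conj (.ax b) ha).cut
        (.sep_comm b a)))
    obtain ⟨e, he, he0, hprop⟩ := pe_sep_left x.2 x.2.toIsTheory
      (isTheory_genF _) hbase
    exact ⟨⟨e, he⟩, he0 (self_mem_genF _), fun a ha b hb => hprop a ha b hb⟩
  -- oplus_unit_coherence
  · intro e x y he hx b hb
    exact x.2.closed (hx b hb _ he) (.sep_unit2 b)
  -- odot_assoc
  · intro x y z w
    constructor
    · rintro ⟨t, hwt, ht⟩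
      have hbase : ∀ a ∈ x.1, ∀ d ∈ pwSet Formula.tri y.1 z.1, Formula.tri a d ∈ w.1 := by
        rintro a ha d ⟨b, hb, c, hc, hd⟩
        have h1 : Formula.tri (Formula.tri a b) c ∈ w.1 := hwt _ (ht a ha b hb) c hc
        exact w.2.closed h1 ((Deriv.tri_assoc1 a b c).cut (.tri_conj (.ax a) hd))
      obtain ⟨s, hs, hs0, hprop⟩ := pe_tri_right w.2 x.2.toIsTheory
        (isTheory_pwTri y.2.toIsTheory z.2.toIsTheory) hbase
      exact ⟨⟨s, hs⟩, fun b hb c hc => hs0 (mem_pwSet_base hb hc),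
        fun a ha d hd => hprop a ha d hd⟩
    · rintro ⟨s, hs, hws⟩
      have hbase : ∀ d ∈ pwSet Formula.tri x.1 y.1, ∀ c ∈ z.1, Formula.tri d c ∈ w.1 := by
        rintro d ⟨a, ha, b, hb, hd⟩ c hc
        have h1 : Formula.tri a (Formula.tri b c) ∈ w.1 := hws a ha _ (hs b hb c hc)
        exact w.2.closed h1 ((Deriv.tri_assoc2 a b c).cut (.tri_conj hd (.ax c)))
      obtain ⟨t, ht, ht0, hprop⟩ := pe_tri_left w.2 z.2.toIsTheory
        (isTheory_pwTri x.2.toIsTheory y.2.toIsTheory) hbase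
      exact ⟨⟨t, ht⟩, fun d hd c hc => hprop d hd c hc,
        fun a ha b hb => ht0 (mem_pwSet_base ha hb)⟩
  -- odot_unit_exists_left
  · intro x
    have hbase : ∀ a ∈ genF (Formula.emp : Formula AP), ∀ b ∈ x.1,
        Formula.tri a b ∈ x.1 := by
      intro a ha b hb
      exact x.2.closed hb ((Deriv.tri_left_unit b).cut (.tri_conj ha (.ax b)))
    obtain ⟨e, he, he0, hprop⟩ := pe_tri_left x.2 x.2.toIsTheory (isTheory_genF _) hbase
    exact ⟨⟨e, he⟩, he0 (self_mem_genF _), fun a ha b hb => hprop a ha b hb⟩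
  -- odot_unit_exists_right
  · intro x
    have hbase : ∀ b ∈ x.1, ∀ a ∈ genF (Formula.emp : Formula AP),
        Formula.tri b a ∈ x.1 := by
      intro b hb a ha
      exact x.2.closed hb ((Deriv.tri_right_unit1 b).cut (.tri_conj (.ax b) ha))
    obtain ⟨e, he, he0, hprop⟩ := pe_tri_right x.2 x.2.toIsTheory (isTheory_genF _) hbase
    exact ⟨⟨e, he⟩, he0 (self_mem_genF _), fun b hb a ha => hprop b hb a ha⟩
  -- odot_coherence_right
  · intro e x y he hx b hb
    exact x.2.closed (hx b hb _ he) (.tri_right_unit2 b)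
  -- unit_closure
  · intro e e' he hee'
    exact hee' he
  -- rev_exchange
  · intro x y z y1 y2 z1 z2 hx hy hz
    have hbase : ∀ e ∈ pwSet Formula.sep y1.1 z1.1, ∀ g ∈ pwSet Formula.sep y2.1 z2.1,
        Formula.tri e g ∈ x.1 := by
      rintro e ⟨a, ha, c, hc, he⟩ g ⟨b, hb, d, hd, hg⟩
      have h1 : Formula.sep (Formula.tri a b) (Formula.tri c d) ∈ x.1 :=
        hx _ (hy a ha b hb) _ (hz c hc d hd)
      exact x.2.closed h1 ((Deriv.rev_ex a b c d).cut (.tri_conj he hg))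
    obtain ⟨u, hu, hu0, hprop1⟩ := pe_tri_left x.2
      (isTheory_pwSep y2.2.toIsTheory z2.2.toIsTheory)
      (isTheory_pwSep y1.2.toIsTheory z1.2.toIsTheory) hbase
    obtain ⟨v, hv, hv0, hprop2⟩ := pe_tri_right x.2 hu.toIsTheory
      (isTheory_pwSep y2.2.toIsTheory z2.2.toIsTheory) hprop1
    refine ⟨⟨u, hu⟩, ⟨v, hv⟩, ?_, ?_, ?_⟩
    · exact fun a ha c hc => hu0 (mem_pwSet_base ha hc)
    · exact fun b hb d hd => hv0 (mem_pwSet_base hb hd)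
    · exact fun e heu g hgv => hprop2 e heu g hgv

end DIBICanon
section DIBITruth

variable {AP : Type}

def cV : AP → Set (PrimeTh AP) := fun p => {Γ | Formula.atom p ∈ Γ.1}

theorem truth_lemma : ∀ (φ : Formula AP) (Γ : PrimeTh AP),
    Sat cle coplus codot cE cV φ Γ ↔ φ ∈ Γ.1 := by
  intro φ
  induction φ with
  | atom p => intro Γ; exact Iff.rfl
  | top => intro Γ; simp only [Sat]; exact ⟨fun _ => Γ.2.top_mem, fun _ => trivial⟩
  | bot => intro Γ; simp only [Sat]; exact ⟨False.elim, fun h => Γ.2.bot_not_mem h⟩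
  | emp => intro Γ; exact Iff.rfl
  | and P Q ihP ihQ =>
    intro Γ; simp only [Sat]
    constructor
    · rintro ⟨h1, h2⟩; exact Γ.2.conj ((ihP Γ).mp h1) ((ihQ Γ).mp h2)
    · intro h
      exact ⟨(ihP Γ).mpr (Γ.2.closed h (Deriv.and1 P Q)),
             (ihQ Γ).mpr (Γ.2.closed h (Deriv.and2 P Q))⟩
  | or P Q ihP ihQ =>
    intro Γ; simp only [Sat]
    constructor
    · rintro (h | h)
      · exact Γ.2.closed ((ihP Γ).mp h) (.or_right1 Q (.ax P))
      · exact Γ.2.closed ((ihQ Γ).mp h) (.or_right2 P (.ax Q))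
    · intro h
      rcases Γ.2.prime h with h | h
      · exact Or.inl ((ihP Γ).mpr h)
      · exact Or.inr ((ihQ Γ).mpr h)
  | imp P Q ihP ihQ =>
    intro Γ; simp only [Sat]
    constructor
    · intro h
      by_contra hn
      have hT : IsTheory (pwSet Formula.and Γ.1 (genF P)) :=
        isTheory_pwSet (fun h1 h2 => Deriv.and_mono h1 h2) Γ.2.toIsTheory (isTheory_genF P)
      have hQn : Q ∉ pwSet Formula.and Γ.1 (genF P) := by
        rintro ⟨a, ha, b, hb, hd⟩
        exact hn (Γ.2.closed ha (.imp_intro ((Deriv.and_mono (.ax a) hb).cut hd)))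
      obtain ⟨Δ, hΔ, hsub, hQΔ⟩ := prime_extension hT hQn
      have hΓΔ : cle Γ ⟨Δ, hΔ⟩ := fun a ha =>
        hsub ⟨a, ha, .top, .top_right P, Deriv.and1 a .top⟩
      have hPΔ : P ∈ Δ := hsub ⟨.top, Γ.2.top_mem, P, .ax P, Deriv.and2 _ _⟩
      exact hQΔ ((ihQ ⟨Δ, hΔ⟩).mp (h ⟨Δ, hΔ⟩ hΓΔ ((ihP ⟨Δ, hΔ⟩).mpr hPΔ)))
    · intro h Δ hΓΔ hP
      have hPΔ := (ihP Δ).mp hP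
      have : Q ∈ Δ.1 := Δ.2.closed (Δ.2.conj (hΓΔ h) hPΔ)
        (.mp (Deriv.and1 _ _) (Deriv.and2 _ _))
      exact (ihQ Δ).mpr this
  | sep P Q ihP ihQ =>
    intro Γ; simp only [Sat]
    constructor
    · rintro ⟨x', y, z, hle, hop, hP, hQ⟩
      exact hle (hop P ((ihP y).mp hP) Q ((ihQ z).mp hQ))
    · intro h
      have hbase : ∀ a ∈ genF P, ∀ b ∈ genF Q, Formula.sep a b ∈ Γ.1 :=
        fun a ha b hb => Γ.2.closed h (.sep_conj ha hb)
      obtain ⟨A, hA, hA0, h1⟩ := pe_sep_left Γ.2 (isTheory_genF Q) (isTheory_genF P) hbase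
      obtain ⟨B, hB, hB0, h2⟩ := pe_sep_right Γ.2 hA.toIsTheory (isTheory_genF Q) h1
      exact ⟨Γ, ⟨A, hA⟩, ⟨B, hB⟩, subset_refl _, fun a ha b hb => h2 a ha b hb,
        (ihP _).mpr (hA0 (self_mem_genF P)), (ihQ _).mpr (hB0 (self_mem_genF Q))⟩
  | wand P Q ihP ihQ =>
    intro Γ; simp only [Sat]
    constructor
    · intro h
      by_contra hn
      have hz0 : IsTheory (pwSet Formula.sep Γ.1 (genF P)) :=
        isTheory_pwSep Γ.2.toIsTheory (isTheory_genF P)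
      have hQn : Q ∉ pwSet Formula.sep Γ.1 (genF P) := by
        rintro ⟨a, ha, b, hb, hd⟩
        exact hn (Γ.2.closed ha (.wand_intro ((Deriv.sep_conj (.ax a) hb).cut hd)))
      obtain ⟨z, hz, hzsub, hQz⟩ := prime_extension hz0 hQn
      obtain ⟨y, hy, hy0, hprop⟩ := pe_sep_right hz Γ.2.toIsTheory (isTheory_genF P)
        (fun a ha b hb => hzsub (mem_pwSet_base ha hb))
      have := h ⟨y, hy⟩ ⟨z, hz⟩ (fun a ha b hb => hprop a ha b hb)
        ((ihP _).mpr (hy0 (self_mem_genF P)))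
      exact hQz ((ihQ _).mp this)
    · intro h y z hz hP
      have : Formula.sep (Formula.wand P Q) P ∈ z.1 := hz _ h P ((ihP y).mp hP)
      exact (ihQ z).mpr (z.2.closed this (.wand_mp (.ax _) (.ax P)))
  | tri P Q ihP ihQ =>
    intro Γ; simp only [Sat]
    constructor
    · rintro ⟨y, z, hod, hP, hQ⟩
      exact hod P ((ihP y).mp hP) Q ((ihQ z).mp hQ)
    · intro h
      have hbase : ∀ a ∈ genF P, ∀ b ∈ genF Q, Formula.tri a b ∈ Γ.1 :=
        fun a ha b hb => Γ.2.closed h (.tri_conj ha hb)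
      obtain ⟨A, hA, hA0, h1⟩ := pe_tri_left Γ.2 (isTheory_genF Q) (isTheory_genF P) hbase
      obtain ⟨B, hB, hB0, h2⟩ := pe_tri_right Γ.2 hA.toIsTheory (isTheory_genF Q) h1
      exact ⟨⟨A, hA⟩, ⟨B, hB⟩, fun a ha b hb => h2 a ha b hb,
        (ihP _).mpr (hA0 (self_mem_genF P)), (ihQ _).mpr (hB0 (self_mem_genF Q))⟩
  | triimpR P Q ihP ihQ =>
    intro Γ; simp only [Sat]
    constructor
    · intro h
      by_contra hn
      have hz0 : IsTheory (pwSet Formula.tri Γ.1 (genF P)) :=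
        isTheory_pwTri Γ.2.toIsTheory (isTheory_genF P)
      have hQn : Q ∉ pwSet Formula.tri Γ.1 (genF P) := by
        rintro ⟨a, ha, b, hb, hd⟩
        exact hn (Γ.2.closed ha (.triimpR_intro ((Deriv.tri_conj (.ax a) hb).cut hd)))
      obtain ⟨z, hz, hzsub, hQz⟩ := prime_extension hz0 hQn
      obtain ⟨y, hy, hy0, hprop⟩ := pe_tri_right hz Γ.2.toIsTheory (isTheory_genF P)
        (fun a ha b hb => hzsub (mem_pwSet_base ha hb))
      have := h Γ ⟨y, hy⟩ ⟨z, hz⟩ (subset_refl _) (fun a ha b hb => hprop a ha b hb)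
        ((ihP _).mpr (hy0 (self_mem_genF P)))
      exact hQz ((ihQ _).mp this)
    · intro h x' y z hle hz hP
      have : Formula.tri (Formula.triimpR P Q) P ∈ z.1 := hz _ (hle h) P ((ihP y).mp hP)
      exact (ihQ z).mpr (z.2.closed this (.triimpR_mp (.ax _) (.ax P)))
  | triimpL P Q ihP ihQ =>
    intro Γ; simp only [Sat]
    constructor
    · intro h
      by_contra hn
      have hz0 : IsTheory (pwSet Formula.tri (genF P) Γ.1) :=
        isTheory_pwTri (isTheory_genF P) Γ.2.toIsTheory
      have hQn : Q ∉ pwSet Formula.tri (genF P) Γ.1 := by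
        rintro ⟨b, hb, a, ha, hd⟩
        exact hn (Γ.2.closed ha (.triimpL_intro ((Deriv.tri_conj hb (.ax a)).cut hd)))
      obtain ⟨z, hz, hzsub, hQz⟩ := prime_extension hz0 hQn
      obtain ⟨y, hy, hy0, hprop⟩ := pe_tri_left hz Γ.2.toIsTheory (isTheory_genF P)
        (fun b hb a ha => hzsub (mem_pwSet_base hb ha))
      have := h Γ ⟨y, hy⟩ ⟨z, hz⟩ (subset_refl _) (fun b hb a ha => hprop b hb a ha)
        ((ihP _).mpr (hy0 (self_mem_genF P)))
      exact hQz ((ihQ _).mp this)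
    · intro h x' y z hle hz hP
      have : Formula.tri P (Formula.triimpL P Q) ∈ z.1 := hz P ((ihP y).mp hP) _ (hle h)
      exact (ihQ z).mpr (z.2.closed this (.triimpL_mp (.ax _) (.ax P)))

end DIBITruth
section DIBISound

variable {AP : Type} {X : Type*} {le : X → X → Prop} {oplus odot : X → X → Set X}
  {E : Set X}

theorem sat_persist (hF : IsDIBIFrame le oplus odot E) {V : AP → Set X}
    (hV : ∀ p x y, x ∈ V p → le x y → y ∈ V p) :
    ∀ (φ : Formula AP) (x y : X), le x y →
      Sat le oplus odot E V φ x → Sat le oplus odot E V φ y := by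
  intro φ
  induction φ with
  | atom p => intro x y hxy h; exact hV p x y h hxy
  | top => intro x y _ _; trivial
  | bot => intro x y _ h; exact h.elim
  | emp => intro x y hxy h; exact hF.unit_closure x y h hxy
  | and P Q ihP ihQ =>
    rintro x y hxy ⟨h1, h2⟩; exact ⟨ihP x y hxy h1, ihQ x y hxy h2⟩
  | or P Q ihP ihQ =>
    rintro x y hxy (h | h)
    · exact Or.inl (ihP x y hxy h)
    · exact Or.inr (ihQ x y hxy h)
  | imp P Q ihP ihQ =>
    intro x y hxy h z hyz hP; exact h z (hF.le_trans _ _ _ hxy hyz) hP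
  | sep P Q ihP ihQ =>
    rintro x y hxy ⟨x', a, b, hle, hop, hP, hQ⟩
    exact ⟨x', a, b, hF.le_trans _ _ _ hle hxy, hop, hP, hQ⟩
  | wand P Q ihP ihQ =>
    intro x y hxy h a z hz hP
    obtain ⟨z', hz'z, hz'⟩ := hF.oplus_down y a z x a hz hxy (hF.le_refl a)
    exact ihQ z' z hz'z (h a z' hz' hP)
  | tri P Q ihP ihQ =>
    rintro x y hxy ⟨a, b, hod, hP, hQ⟩
    obtain ⟨a', b', haa', hbb', hod'⟩ := hF.odot_up a b x y hod hxy
    exact ⟨a', b', hod', ihP a a' haa' hP, ihQ b b' hbb' hQ⟩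
  | triimpR P Q ihP ihQ =>
    intro x y hxy h x' a z hyx' hz hP
    exact h x' a z (hF.le_trans _ _ _ hxy hyx') hz hP
  | triimpL P Q ihP ihQ =>
    intro x y hxy h x' a z hyx' hz hP
    exact h x' a z (hF.le_trans _ _ _ hxy hyx') hz hP

theorem soundness (hF : IsDIBIFrame le oplus odot E) {V : AP → Set X}
    (hV : ∀ p x y, x ∈ V p → le x y → y ∈ V p) {P Q : Formula AP} (h : Deriv P Q) :
    ∀ x, Sat le oplus odot E V P x → Sat le oplus odot E V Q x := by
  induction h with
  | ax P => exact fun x h => h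
  | top_right P => intro x _; simp only [Sat]
  | bot_left P => intro x hx; simp only [Sat] at hx
  | or_left h1 h2 ih1 ih2 =>
    intro x hx; simp only [Sat] at hx
    rcases hx with hx | hx
    · exact ih1 x hx
    · exact ih2 x hx
  | or_right1 Q2 h ih => intro x hx; exact Or.inl (ih x hx)
  | or_right2 Q1 h ih => intro x hx; exact Or.inr (ih x hx)
  | and_right h1 h2 ih1 ih2 => intro x hx; exact ⟨ih1 x hx, ih2 x hx⟩
  | and_left P h ih => intro x hx; exact ih x hx.2
  | and_elim1 h ih => intro x hx; exact (ih x hx).1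
  | and_elim2 h ih => intro x hx; exact (ih x hx).2
  | imp_intro h ih =>
    intro x hx y hxy hQ
    exact ih y ⟨sat_persist hF hV _ x y hxy hx, hQ⟩
  | mp h1 h2 ih1 ih2 =>
    intro x hx; exact ih1 x hx x (hF.le_refl x) (ih2 x hx)
  | wand_intro h ih =>
    intro x hx y z hz hQ
    exact ih z ⟨z, x, y, hF.le_refl z, hz, hx, hQ⟩
  | wand_mp h1 h2 ih1 ih2 =>
    intro x hx
    obtain ⟨x', y, z, hle, hop, hP, hS⟩ := hx
    exact sat_persist hF hV _ x' x hle (ih1 y hP z x' hop (ih2 z hS))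
  | triimpR_intro h ih =>
    intro x hx x' y z hxx' hz hQ
    exact ih z ⟨x', y, hz, sat_persist hF hV _ x x' hxx' hx, hQ⟩
  | triimpR_mp h1 h2 ih1 ih2 =>
    intro x hx
    obtain ⟨y, z, hod, hP, hS⟩ := hx
    exact ih1 y hP y z x (hF.le_refl y) hod (ih2 z hS)
  | triimpL_intro h ih =>
    intro x hx x' y z hxx' hz hP
    exact ih z ⟨y, x', hz, hP, sat_persist hF hV _ x x' hxx' hx⟩
  | triimpL_mp h1 h2 ih1 ih2 =>
    intro x hx
    obtain ⟨y, z, hod, hS, hP⟩ := hx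
    exact ih1 z hP z y x (hF.le_refl z) hod (ih2 y hS)
  | sep_unit1 P =>
    intro x hx
    obtain ⟨e, heE, hox⟩ := hF.oplus_unit_exists x
    exact ⟨x, x, e, hF.le_refl x, hF.oplus_comm e x x hox, hx, heE⟩
  | sep_unit2 P =>
    intro x hx
    obtain ⟨x', y, z, hle, hop, hP, hz⟩ := hx
    exact sat_persist hF hV P y x
      (hF.le_trans _ _ _ (hF.oplus_unit_coherence z x' y hz hop) hle) hP
  | sep_conj h1 h2 ih1 ih2 =>
    intro x hx
    obtain ⟨x', y, z, hle, hop, hP, hQ⟩ := hx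
    exact ⟨x', y, z, hle, hop, ih1 y hP, ih2 z hQ⟩
  | sep_comm P Q =>
    intro x hx
    obtain ⟨x', y, z, hle, hop, hP, hQ⟩ := hx
    exact ⟨x', z, y, hle, hF.oplus_comm y z x' hop, hQ, hP⟩
  | sep_assoc1 P Q R =>
    intro x hx
    obtain ⟨x', t, z, hle, hop, hPQ, hR⟩ := hx
    obtain ⟨t', a, b, hlet, hopt, hP, hQ⟩ := hPQ
    obtain ⟨x'', hx''le, hx''⟩ := hF.oplus_down t z x' t' z hop hlet (hF.le_refl z)
    obtain ⟨s, hs, hx''s⟩ := hF.oplus_assoc a b z t' x'' hx'' hopt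
    exact ⟨x'', a, s, hF.le_trans _ _ _ hx''le hle, hx''s, hP,
      ⟨s, b, z, hF.le_refl s, hs, hQ, hR⟩⟩
  | sep_assoc2 P Q R =>
    intro x hx
    obtain ⟨x', a, t, hle, hop, hP, hQR⟩ := hx
    obtain ⟨t', b, c, hlet, hopt, hQ, hR⟩ := hQR
    obtain ⟨x'', hx''le, hx''⟩ := hF.oplus_down a t x' a t' hop (hF.le_refl a) hlet
    have h1 : x'' ∈ oplus t' a := hF.oplus_comm a t' x'' hx''
    have h2 : t' ∈ oplus c b := hF.oplus_comm b c t' hopt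
    obtain ⟨s, hs, hx''s⟩ := hF.oplus_assoc c b a t' x'' h1 h2
    exact ⟨x'', s, c, hF.le_trans _ _ _ hx''le hle, hF.oplus_comm c s x'' hx''s,
      ⟨s, a, b, hF.le_refl s, hF.oplus_comm b a s hs, hP, hQ⟩, hR⟩
  | tri_left_unit P =>
    intro x hx
    obtain ⟨e, heE, h⟩ := hF.odot_unit_exists_left x
    exact ⟨e, x, h, heE, hx⟩
  | tri_right_unit1 P =>
    intro x hx
    obtain ⟨e, heE, h⟩ := hF.odot_unit_exists_right x
    exact ⟨x, e, h, hx, heE⟩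
  | tri_right_unit2 P =>
    intro x hx
    obtain ⟨y, e, hod, hP, heE⟩ := hx
    exact sat_persist hF hV P y x (hF.odot_coherence_right e x y heE hod) hP
  | tri_conj h1 h2 ih1 ih2 =>
    intro x hx
    obtain ⟨y, z, hod, hP, hQ⟩ := hx
    exact ⟨y, z, hod, ih1 y hP, ih2 z hQ⟩
  | tri_assoc1 P Q R =>
    intro x hx
    obtain ⟨t, c, hod, hPQ, hR⟩ := hx
    obtain ⟨a, b, hodt, hP, hQ⟩ := hPQ
    obtain ⟨s, hs, hxs⟩ := (hF.odot_assoc a b c x).mp ⟨t, hod, hodt⟩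
    exact ⟨a, s, hxs, hP, ⟨b, c, hs, hQ, hR⟩⟩
  | tri_assoc2 P Q R =>
    intro x hx
    obtain ⟨a, s, hod, hP, hQR⟩ := hx
    obtain ⟨b, c, hods, hQ, hR⟩ := hQR
    obtain ⟨t, hxt, ht⟩ := (hF.odot_assoc a b c x).mpr ⟨s, hods, hod⟩
    exact ⟨t, c, hxt, ⟨a, b, ht, hP, hQ⟩, hR⟩
  | rev_ex P Q R S =>
    intro x hx
    obtain ⟨x', y, z, hle, hop, hPQ, hRS⟩ := hx
    obtain ⟨y1, y2, hody, hP, hQ⟩ := hPQ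
    obtain ⟨z1, z2, hodz, hR, hS⟩ := hRS
    obtain ⟨u, v, hu, hv, hx'⟩ := hF.rev_exchange x' y z y1 y2 z1 z2 hop hody hodz
    obtain ⟨u', v', huu', hvv', hx2⟩ := hF.odot_up u v x' x hx' hle
    exact ⟨u', v', hx2, ⟨u, y1, z1, huu', hu, hP, hR⟩, ⟨v, y2, z2, hvv', hv, hQ, hS⟩⟩

end DIBISound
/-- **Soundness and completeness of DIBI for its Kripke semantics.** A sequent
`P ⊢ Q` is derivable in the DIBI Hilbert system iff `P ⊨ Q`: in every DIBI frame
with a persistent valuation, every state satisfying `P` satisfies `Q`. -/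
theorem kripke_soundness_completeness {AP : Type} (P Q : Formula AP) :
    Deriv P Q ↔
      ∀ (X : Type) (le : X → X → Prop) (oplus odot : X → X → Set X) (E : Set X),
        IsDIBIFrame le oplus odot E →
        ∀ V : AP → Set X, (∀ p x y, x ∈ V p → le x y → y ∈ V p) →
        ∀ x : X, Sat le oplus odot E V P x → Sat le oplus odot E V Q x := by
  constructor
  · intro h X le oplus odot E hF V hV x hx
    exact soundness hF hV h x hx
  · intro h
    by_contra hn
    have hQ : Q ∉ genF P := hn
    obtain ⟨Γ, hΓ, hsub, hQΓ⟩ := prime_extension (isTheory_genF P) hQ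
    have hsat := h (PrimeTh AP) cle coplus codot cE canon_frame cV
      (fun p x y hx hxy => hxy hx) ⟨Γ, hΓ⟩
      ((truth_lemma P ⟨Γ, hΓ⟩).mpr (hsub (self_mem_genF P)))
    exact hQΓ ((truth_lemma Q ⟨Γ, hΓ⟩).mp hsat)
end

section
/- Semi-graphoid Symmetry is derivable in DIBI: for all DIBI formulas P, Q, R, the sequent ⊢ P ▷ (Q ∗ R) → P ▷ (R ∗ Q) is derivable in the DIBI Hilbert system (i.e., ⊤ ⊢ P ▷ (Q ∗ R) → P ▷ (R ∗ Q)). -/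
/-- **Semi-graphoid Symmetry is derivable in DIBI:**
`⊤ ⊢ P ▷ (Q ∗ R) → P ▷ (R ∗ Q)`. -/
theorem semigraphoid_symmetry_derivable {AP : Type*} (P Q R : Formula AP) :
    Deriv (.top : Formula AP)
      (.imp (.tri P (.sep Q R)) (.tri P (.sep R Q))) := by
  exact .imp_intro (.and_left _ (.tri_conj (.ax P) (.sep_comm Q R)))
end

section
/- Semi-graphoid Decomposition is derivable in DIBI: for all DIBI formulas P, Q, R, S, the sequent ⊢ P ▷ (Q ∗ (R ∧ S)) → ((P ▷ (Q ∗ R)) ∧ (P ▷ (Q ∗ S))) is derivable in the DIBI Hilbert system. -/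
/-- **Semi-graphoid Decomposition is derivable in DIBI:**
`⊤ ⊢ P ▷ (Q ∗ (R ∧ S)) → ((P ▷ (Q ∗ R)) ∧ (P ▷ (Q ∗ S)))`. -/
theorem semigraphoid_decomposition_derivable {AP : Type*} (P Q R S : Formula AP) :
    Deriv (.top : Formula AP)
      (.imp (.tri P (.sep Q (.and R S)))
            (.and (.tri P (.sep Q R)) (.tri P (.sep Q S)))) := by
  exact .imp_intro (.and_left _ (.and_right
    (.tri_conj (.ax P) (.sep_conj (.ax Q) (.and_elim1 (.ax _))))
    (.tri_conj (.ax P) (.sep_conj (.ax Q) (.and_elim2 (.ax _))))))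
end

section
/- Exchange equality for input-preserving Markov kernels: for f1, f2, f3, f4 ∈ M^D, (i) if (f1 ⊙ f3) ⊕ (f2 ⊙ f4) is defined then (f1 ⊕ f2) ⊙ (f3 ⊕ f4) is also defined and (f1 ⊕ f2) ⊙ (f3 ⊕ f4) = (f1 ⊙ f3) ⊕ (f2 ⊙ f4); (ii) if f1 ⊙ f3 and f2 ⊙ f4 are defined and (f1 ⊕ f2) ⊙ (f3 ⊕ f4) is defined, then (f1 ⊙ f3) ⊕ (f2 ⊙ f4) is defined and the two composites are equal. -/
open scoped ENNReal

/-- A memory over a set `S` of variables: an assignment of a value to each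
variable in `S`. -/
def Mem (Val Var : Type) (S : Set Var) : Type := S → Val

/-- Restriction (projection) of a memory to a smaller domain. -/
def restr {Val Var : Type} {S T : Set Var} (h : T ⊆ S) (m : Mem Val Var S) :
    Mem Val Var T :=
  fun t => m ⟨t.1, h t.2⟩

/-- Two memories (over possibly different domains) agree if they coincide on the
intersection of their domains.  For `T ⊆ S`, `Agree m r` says exactly that `r`
is the restriction `m^T`. -/
def Agree {Val Var : Type} {S T : Set Var} (m : Mem Val Var S) (r : Mem Val Var T) : Prop :=
  ∀ (i : Var) (h1 : i ∈ S) (h2 : i ∈ T), m ⟨i, h1⟩ = r ⟨i, h2⟩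
/-- A (sub)distribution as a mass function into `ℝ≥0∞`; `IsDist μ` says the total
mass is `1`, i.e. `μ` is a (finitely supported, as all types involved are finite)
probability distribution. -/
def IsDist {α : Type*} (μ : α → ℝ≥0∞) : Prop := ∑' a, μ a = 1

open Classical in
/-- Marginalization of a mass function on memories over `S` to memories over `T`
(intended for `T ⊆ S`). -/
noncomputable def marg {Val Var : Type} {S : Set Var} (μ : Mem Val Var S → ℝ≥0∞)
    (T : Set Var) : Mem Val Var T → ℝ≥0∞ :=
  fun r => ∑' m : Mem Val Var S, if Agree m r then μ m else 0

open Classical in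
/-- The point mass (Dirac distribution) at a memory. -/
noncomputable def dirac {Val Var : Type} {S : Set Var} (d : Mem Val Var S) :
    Mem Val Var S → ℝ≥0∞ :=
  fun r => if r = d then 1 else 0

/-- A Markov-kernel-shaped map on memories, with explicit domain and range. -/
structure PKernel (Val Var : Type) where
  dom : Set Var
  ran : Set Var
  f : Mem Val Var dom → Mem Val Var ran → ℝ≥0∞

/-- Membership in `M^D`: `K` is a Markov kernel (every output is a probability
distribution) that preserves its input to its output (the marginal of `K.f d`
on the domain is the point mass at `d`). -/
def InMD {Val Var : Type} (K : PKernel Val Var) : Prop :=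
  K.dom ⊆ K.ran ∧ (∀ d, IsDist (K.f d)) ∧ (∀ d, marg (K.f d) K.dom = dirac d)

/-- Definedness condition for parallel composition. -/
def OplusDef {Val Var : Type} (K1 K2 : PKernel Val Var) : Prop :=
  K1.ran ∩ K2.ran = K1.dom ∩ K2.dom

/-- Parallel composition of kernels. -/
noncomputable def poplus {Val Var : Type} (K1 K2 : PKernel Val Var) : PKernel Val Var where
  dom := K1.dom ∪ K2.dom
  ran := K1.ran ∪ K2.ran
  f := fun d m =>
    K1.f (restr Set.subset_union_left d) (restr Set.subset_union_left m) *
    K2.f (restr Set.subset_union_right d) (restr Set.subset_union_right m)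

open Classical in
/-- Sequential (Kleisli) composition of kernels, defined when
`K1.ran = K2.dom` (and returning the zero kernel otherwise). -/
noncomputable def podot {Val Var : Type} (K1 K2 : PKernel Val Var) : PKernel Val Var where
  dom := K1.dom
  ran := K2.ran
  f := fun d m =>
    if h : K1.ran = K2.dom then
      ∑' m' : Mem Val Var K1.ran, K1.f d m' * K2.f (restr (le_of_eq h.symm) m') m
    else 0

open Classical in
/-- The identity (unit) kernel on memories over `R`. -/
noncomputable def unitK (Val Var : Type) (R : Set Var) : PKernel Val Var where
  dom := R
  ran := R
  f := fun d => dirac d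

/-- The preorder on kernels: `f ⊑ g` iff `g = (f ⊕ unit_R) ⊙ h` for some set of
variables `R` and some `h ∈ M^D` (with both compositions defined). -/
def ple {Val Var : Type} (K1 K2 : PKernel Val Var) : Prop :=
  ∃ (R : Set Var) (h : PKernel Val Var), InMD h ∧
    OplusDef K1 (unitK Val Var R) ∧
    (poplus K1 (unitK Val Var R)).ran = h.dom ∧
    K2 = podot (poplus K1 (unitK Val Var R)) h

/-- Support of an input-preserving kernel: outputs restrict to the input. -/
lemma InMD.supp {Val Var : Type} {K : PKernel Val Var} (hK : InMD K)
    (d : Mem Val Var K.dom) (m : Mem Val Var K.ran) (h : K.f d m ≠ 0) :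
    restr hK.1 m = d := by
  classical
  by_contra hne
  apply h
  have hmarg := congrFun (hK.2.2 d) (restr hK.1 m)
  rw [dirac] at hmarg
  rw [if_neg hne] at hmarg
  have hle : K.f d m ≤ marg (K.f d) K.dom (restr hK.1 m) := by
    rw [marg]
    have heq : K.f d m = if Agree m (restr hK.1 m) then K.f d m else 0 := by
      rw [if_pos]; intro i hh1 hh2; rfl
    rw [heq]
    exact ENNReal.le_tsum m
  rw [hmarg] at hle
  exact le_antisymm hle zero_le

/-- The exchange equality for kernels (the computational core). -/
lemma exchange_kernel {Val Var : Type} (f1 f2 f3 f4 : PKernel Val Var)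
    (h1 : InMD f1) (h2 : InMD f2)
    (e13 : f1.ran = f3.dom) (e24 : f2.ran = f4.dom)
    (hint : f3.dom ∩ f4.dom ⊆ f1.dom ∩ f2.dom) :
    podot (poplus f1 f2) (poplus f3 f4) = poplus (podot f1 f3) (podot f2 f4) := by
  classical
  obtain ⟨T1, U1, g3⟩ := f3
  obtain ⟨T2, U2, g4⟩ := f4
  dsimp at e13 e24 hint
  subst e13; subst e24
  unfold podot poplus
  dsimp only
  congr 1
  funext d m
  rw [dif_pos rfl, dif_pos rfl, dif_pos rfl]
  set d1 : Mem Val Var f1.dom := restr Set.subset_union_left d with hd1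
  set d2 : Mem Val Var f2.dom := restr Set.subset_union_right d with hd2
  set u1 : Mem Val Var U1 := restr Set.subset_union_left m with hu1
  set u2 : Mem Val Var U2 := restr Set.subset_union_right m with hu2
  set F : Mem Val Var f1.ran × Mem Val Var f2.ran → ℝ≥0∞ :=
    fun p => (f1.f d1 p.1 * g3 p.1 u1) * (f2.f d2 p.2 * g4 p.2 u2) with hF
  set pairMap : Mem Val Var (f1.ran ∪ f2.ran) → Mem Val Var f1.ran × Mem Val Var f2.ran :=
    fun m' => (restr Set.subset_union_left m', restr Set.subset_union_right m') with hpair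
  have hinj : Function.Injective pairMap := by
    intro x y hxy
    funext i
    rcases i.2 with hi | hi
    · exact congrFun (congrArg Prod.fst hxy) ⟨i.1, hi⟩
    · exact congrFun (congrArg Prod.snd hxy) ⟨i.1, hi⟩
  have hzero : Function.support F ⊆ Set.range pairMap := by
    intro p hFp
    rw [Function.mem_support, hF] at hFp
    have h1ne : f1.f d1 p.1 ≠ 0 := fun hz => hFp (by simp [hz])
    have h2ne : f2.f d2 p.2 ≠ 0 := fun hz => hFp (by simp [hz])
    have ha := h1.supp d1 p.1 h1ne
    have hb := h2.supp d2 p.2 h2ne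
    refine ⟨fun i => if h : i.1 ∈ f1.ran then p.1 ⟨i.1, h⟩
      else p.2 ⟨i.1, i.2.resolve_left h⟩, ?_⟩
    apply Prod.ext
    · funext t
      exact dif_pos t.2
    · funext t
      by_cases ht : t.1 ∈ f1.ran
      · have hdom : t.1 ∈ f1.dom ∩ f2.dom := hint ⟨ht, t.2⟩
        have e1 : p.1 ⟨t.1, ht⟩ = d1 ⟨t.1, hdom.1⟩ := congrFun ha ⟨t.1, hdom.1⟩
        have e2 : p.2 t = d2 ⟨t.1, hdom.2⟩ := congrFun hb ⟨t.1, hdom.2⟩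
        show (if h : t.1 ∈ f1.ran then p.1 ⟨t.1, h⟩ else _) = p.2 t
        rw [dif_pos ht, e1, e2]
        rfl
      · show (if h : t.1 ∈ f1.ran then p.1 ⟨t.1, h⟩ else p.2 _) = p.2 t
        rw [dif_neg ht]
  calc ∑' m' : Mem Val Var (f1.ran ∪ f2.ran),
        (f1.f d1 (restr Set.subset_union_left m') * f2.f d2 (restr Set.subset_union_right m')) *
        (g3 (restr Set.subset_union_left (restr (le_of_eq rfl.symm) m')) u1 *
         g4 (restr Set.subset_union_right (restr (le_of_eq rfl.symm) m')) u2)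
      = ∑' m', F (pairMap m') := tsum_congr fun m' => (mul_mul_mul_comm _ _ _ _)
    _ = ∑' p, F p := hinj.tsum_eq hzero
    _ = ∑' a, ∑' b, F (a, b) := ENNReal.tsum_prod (f := fun a b => F (a, b))
    _ = (∑' a, f1.f d1 a * g3 a u1) * (∑' b, f2.f d2 b * g4 b u2) := by
        rw [← ENNReal.tsum_mul_right]
        exact tsum_congr fun a => ENNReal.tsum_mul_left (a := f1.f d1 a * g3 a u1) (f := fun b => f2.f d2 b * g4 b u2)

/-- **Exchange equality for input-preserving Markov kernels.** For
`f1, f2, f3, f4 ∈ M^D`: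
(i) if `(f1 ⊙ f3) ⊕ (f2 ⊙ f4)` is defined, then `(f1 ⊕ f2) ⊙ (f3 ⊕ f4)` is also
defined and the two composites are equal;
(ii) if `f1 ⊙ f3` and `f2 ⊙ f4` are defined and `(f1 ⊕ f2) ⊙ (f3 ⊕ f4)` is defined,
then `(f1 ⊙ f3) ⊕ (f2 ⊙ f4)` is defined and the two composites are equal. -/
theorem MD_exchange_equality {Val Var : Type} [Fintype Val] [Fintype Var]
    (f1 f2 f3 f4 : PKernel Val Var)
    (h1 : InMD f1) (h2 : InMD f2) (h3 : InMD f3) (h4 : InMD f4) :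
    ((f1.ran = f3.dom → f2.ran = f4.dom → OplusDef (podot f1 f3) (podot f2 f4) →
        OplusDef f1 f2 ∧ OplusDef f3 f4 ∧ (poplus f1 f2).ran = (poplus f3 f4).dom ∧
        podot (poplus f1 f2) (poplus f3 f4) = poplus (podot f1 f3) (podot f2 f4)) ∧
     (f1.ran = f3.dom → f2.ran = f4.dom →
        OplusDef f1 f2 → OplusDef f3 f4 → (poplus f1 f2).ran = (poplus f3 f4).dom →
        OplusDef (podot f1 f3) (podot f2 f4) ∧
        podot (poplus f1 f2) (poplus f3 f4) = poplus (podot f1 f3) (podot f2 f4))) := by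
  constructor
  · intro e13 e24 hop
    have hop' : f3.ran ∩ f4.ran = f1.dom ∩ f2.dom := hop
    have hA : f1.ran ∩ f2.ran = f1.dom ∩ f2.dom := by
      apply subset_antisymm
      · calc f1.ran ∩ f2.ran = f3.dom ∩ f4.dom := by rw [e13, e24]
          _ ⊆ f3.ran ∩ f4.ran := Set.inter_subset_inter h3.1 h4.1
          _ = f1.dom ∩ f2.dom := hop'
      · exact Set.inter_subset_inter h1.1 h2.1
    have hint : f3.dom ∩ f4.dom ⊆ f1.dom ∩ f2.dom := by
      rw [← e13, ← e24]; exact hA.subset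
    refine ⟨hA, ?_, ?_, exchange_kernel f1 f2 f3 f4 h1 h2 e13 e24 hint⟩
    · show f3.ran ∩ f4.ran = f3.dom ∩ f4.dom
      rw [hop', ← e13, ← e24, hA]
    · show f1.ran ∪ f2.ran = f3.dom ∪ f4.dom
      rw [e13, e24]
  · intro e13 e24 hA hB _
    have hA' : f1.ran ∩ f2.ran = f1.dom ∩ f2.dom := hA
    have hB' : f3.ran ∩ f4.ran = f3.dom ∩ f4.dom := hB
    have hint : f3.dom ∩ f4.dom ⊆ f1.dom ∩ f2.dom := by
      rw [← e13, ← e24]; exact hA'.subset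
    refine ⟨?_, exchange_kernel f1 f2 f3 f4 h1 h2 e13 e24 hint⟩
    show f3.ran ∩ f4.ran = f1.dom ∩ f2.dom
    rw [hB', ← e13, ← e24, hA']
end

section
/- The probabilistic model is a DIBI frame: the structure (M^D, ⊑, ⊕, ⊙, M^D), where ⊕ and ⊙ are the partial deterministic parallel and sequential compositions of input-preserving Markov kernels (regarded as operations returning at most a singleton set) and the unit set is all of M^D, satisfies all twelve DIBI frame conditions; in particular ⊑ is a preorder on M^D. -/
open scoped ENNReal

/-- The carrier of the probabilistic model: input-preserving Markov kernels. -/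
def MD (Val Var : Type) : Type := {K : PKernel Val Var // InMD K}

/-- Parallel composition, as a non-deterministic (in fact, partial deterministic)
operation on `M^D`: the singleton of `x ⊕ y` when defined, and `∅` otherwise. -/
noncomputable def mdOplus {Val Var : Type} (x y : MD Val Var) : Set (MD Val Var) :=
  {z | OplusDef x.1 y.1 ∧ z.1 = poplus x.1 y.1}

/-- Sequential composition, as a non-deterministic (in fact, partial deterministic)
operation on `M^D`: the singleton of `x ⊙ y` when defined, and `∅` otherwise. -/
noncomputable def mdOdot {Val Var : Type} (x y : MD Val Var) : Set (MD Val Var) :=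
  {z | x.1.ran = y.1.dom ∧ z.1 = podot x.1 y.1}
section Infra
open Classical
variable {Val Var : Type}

lemma Mem.ext2 {S : Set Var} {m1 m2 : Mem Val Var S}
    (h : ∀ (i : Var) (hi : i ∈ S), m1 ⟨i, hi⟩ = m2 ⟨i, hi⟩) : m1 = m2 :=
  funext fun t => h t.1 t.2

lemma restr_self {S : Set Var} (h : S ⊆ S) (m : Mem Val Var S) : restr h m = m := rfl

lemma restr_restr {S T U : Set Var} (h1 : T ⊆ S) (h2 : U ⊆ T) (h3 : U ⊆ S)
    (m : Mem Val Var S) : restr h2 (restr h1 m) = restr h3 m := rfl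

lemma agree_iff {S T : Set Var} (h : T ⊆ S) (m : Mem Val Var S) (r : Mem Val Var T) :
    Agree m r ↔ restr h m = r := by
  constructor
  · intro ha; funext t; exact ha t.1 (h t.2) t.2
  · rintro rfl i h1 h2; rfl

lemma agree_restr {S T : Set Var} (h : T ⊆ S) (m : Mem Val Var S) :
    Agree m (restr h m) := fun i h1 h2 => rfl

lemma agree_restr_iff {S T U : Set Var} (hTS : T ⊆ S) (hUT : U ⊆ T)
    (m : Mem Val Var S) (r : Mem Val Var U) :
    Agree (restr hTS m) r ↔ Agree m r := by
  constructor
  · intro ha i h1 h2; exact ha i (hUT h2) h2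
  · intro ha i h1 h2; exact ha i (hTS h1) h2

lemma agree_same {S : Set Var} (m r : Mem Val Var S) : Agree m r ↔ m = r := by
  constructor
  · intro ha; exact Mem.ext2 fun i hi => ha i hi hi
  · rintro rfl i h1 h2; rfl

lemma tsum_dirac {S : Set Var} (d : Mem Val Var S) : ∑' r, dirac d r = 1 := by
  rw [tsum_eq_single d (by intro b hb; simp [dirac, hb])]
  simp [dirac]

lemma marg_dirac (S : Set Var) (d : Mem Val Var S) : marg (dirac d) S = dirac d := by
  funext r
  unfold marg
  rw [tsum_eq_single d (by intro b hb; simp [dirac, hb])]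
  by_cases h : r = d
  · subst h; rw [if_pos ((agree_same r r).mpr rfl)]
  · rw [if_neg (fun ha => h ((agree_same d r).mp ha).symm)]; simp [dirac, h]

lemma unitK_inMD (R : Set Var) : InMD (unitK Val Var R) :=
  ⟨subset_rfl, fun d => tsum_dirac d, fun d => marg_dirac R d⟩

/-- Support lemma: an input-preserving kernel can only output memories extending
its input. -/
lemma InMD.support {K : PKernel Val Var} (hK : InMD K) (d : Mem Val Var K.dom)
    (m : Mem Val Var K.ran) (hm : K.f d m ≠ 0) : restr hK.1 m = d := by
  by_contra hne
  have h1 : marg (K.f d) K.dom (restr hK.1 m) = 0 := by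
    rw [hK.2.2 d]; simp [dirac, hne]
  have h2 : K.f d m ≤ marg (K.f d) K.dom (restr hK.1 m) := by
    unfold marg
    refine le_trans ?_ (ENNReal.le_tsum m)
    rw [if_pos (agree_restr hK.1 m)]
  exact hm (le_antisymm (h1 ▸ h2) zero_le)

/-- Glue two memories over `A` and `B` into one over `A ∪ B` (preferring `A`). -/
noncomputable def glue {A B : Set Var} (m1 : Mem Val Var A) (m2 : Mem Val Var B) :
    Mem Val Var (A ∪ B) :=
  fun i => if h : i.1 ∈ A then m1 ⟨i.1, h⟩ else m2 ⟨i.1, i.2.resolve_left h⟩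

/-- Memories over a union correspond to agreeing pairs of memories. -/
noncomputable def memEquiv (A B : Set Var) :
    ↥{p : Mem Val Var A × Mem Val Var B | Agree p.1 p.2} ≃ Mem Val Var (A ∪ B) where
  toFun p := glue p.1.1 p.1.2
  invFun m := ⟨(restr Set.subset_union_left m, restr Set.subset_union_right m),
    fun i h1 h2 => rfl⟩
  left_inv := by
    rintro ⟨⟨m1, m2⟩, hp⟩
    refine Subtype.ext (Prod.ext ?_ ?_) <;> funext t
    · show glue m1 m2 ⟨t.1, Set.subset_union_left t.2⟩ = m1 t
      unfold glue; rw [dif_pos t.2]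
    · show glue m1 m2 ⟨t.1, Set.subset_union_right t.2⟩ = m2 t
      unfold glue
      by_cases h : t.1 ∈ A
      · rw [dif_pos h]; exact hp t.1 h t.2
      · rw [dif_neg h]
  right_inv := by
    intro m
    funext t
    show glue _ _ t = m t
    unfold glue
    by_cases h : t.1 ∈ A
    · rw [dif_pos h]; rfl
    · rw [dif_neg h]; rfl

/-- Key factorization: summing a product over memories on a union equals the
product of sums, provided the two factors can only be simultaneously nonzero on
agreeing memories. -/
lemma tsum_union_mul {A B : Set Var} (F : Mem Val Var A → ℝ≥0∞) (G : Mem Val Var B → ℝ≥0∞)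
    (hcompat : ∀ m1 m2, F m1 ≠ 0 → G m2 ≠ 0 → Agree m1 m2) :
    ∑' m : Mem Val Var (A ∪ B),
      F (restr Set.subset_union_left m) * G (restr Set.subset_union_right m)
      = (∑' m1, F m1) * (∑' m2, G m2) := by
  have hprod : (∑' p : Mem Val Var A × Mem Val Var B, F p.1 * G p.2)
      = (∑' m1, F m1) * (∑' m2, G m2) :=
    calc ∑' p : Mem Val Var A × Mem Val Var B, F p.1 * G p.2
        = ∑' a, ∑' b, F a * G b := ENNReal.tsum_prod'
      _ = ∑' a, F a * ∑' b, G b := tsum_congr fun _ => ENNReal.tsum_mul_left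
      _ = (∑' a, F a) * ∑' b, G b := ENNReal.tsum_mul_right
  rw [← hprod]
  calc ∑' m : Mem Val Var (A ∪ B),
      F (restr Set.subset_union_left m) * G (restr Set.subset_union_right m)
      = ∑' p : ↥{p : Mem Val Var A × Mem Val Var B | Agree p.1 p.2},
        F (restr Set.subset_union_left (memEquiv A B p))
          * G (restr Set.subset_union_right (memEquiv A B p)) :=
      ((memEquiv A B).tsum_eq _).symm
    _ = ∑' p : ↥{p : Mem Val Var A × Mem Val Var B | Agree p.1 p.2}, F p.1.1 * G p.1.2 := by
      refine tsum_congr fun p => ?_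
      have h1 : restr Set.subset_union_left (memEquiv A B p) = p.1.1 :=
        congrArg Prod.fst (congrArg Subtype.val ((memEquiv A B).left_inv p))
      have h2 : restr Set.subset_union_right (memEquiv A B p) = p.1.2 :=
        congrArg Prod.snd (congrArg Subtype.val ((memEquiv A B).left_inv p))
      rw [h1, h2]
    _ = ∑' p : Mem Val Var A × Mem Val Var B, F p.1 * G p.2 := by
      rw [tsum_subtype {p : Mem Val Var A × Mem Val Var B | Agree p.1 p.2}
        (fun p => F p.1 * G p.2)]
      refine tsum_congr fun p => ?_
      rw [Set.indicator_apply]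
      by_cases hp : p ∈ {p : Mem Val Var A × Mem Val Var B | Agree p.1 p.2}
      · rw [if_pos hp]
      · rw [if_neg hp]
        by_cases hF : F p.1 = 0
        · rw [hF, zero_mul]
        · by_cases hG : G p.2 = 0
          · rw [hG, mul_zero]
          · exact absurd (hcompat p.1 p.2 hF hG) hp

end Infra
section Infra2
open Classical
variable {Val Var : Type}

instance : Subsingleton (Mem Val Var (∅ : Set Var)) :=
  ⟨fun a b => funext fun i => absurd i.2 (Set.notMem_empty i.1)⟩

lemma PKernel.ext_of {K1 K2 : PKernel Val Var} (hd : K1.dom = K2.dom) (hr : K1.ran = K2.ran)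
    (hf : ∀ d m, K1.f d m = K2.f (restr hd.ge d) (restr hr.ge m)) : K1 = K2 := by
  obtain ⟨D1, R1, f1⟩ := K1
  obtain ⟨D2, R2, f2⟩ := K2
  dsimp at hd hr hf
  subst hd; subst hr
  exact congrArg (PKernel.mk D1 R1) (funext fun d => funext fun m => hf d m)

lemma eq_restr_union_iff {A B : Set Var} (m d : Mem Val Var (A ∪ B)) :
    m = d ↔ restr Set.subset_union_left m = restr Set.subset_union_left d ∧
      restr Set.subset_union_right m = restr Set.subset_union_right d := by
  constructor
  · rintro rfl; exact ⟨rfl, rfl⟩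
  · rintro ⟨h1, h2⟩
    refine Mem.ext2 fun i hi => ?_
    rcases hi with h | h
    · exact congrFun h1 ⟨i, h⟩
    · exact congrFun h2 ⟨i, h⟩

lemma dirac_mul_dirac {A B : Set Var} (d r : Mem Val Var (A ∪ B)) :
    dirac (restr Set.subset_union_left d) (restr Set.subset_union_left r) *
      dirac (restr Set.subset_union_right d) (restr Set.subset_union_right r)
      = dirac d r := by
  by_cases h : r = d
  · subst h; simp [dirac]
  · rw [show dirac d r = 0 from if_neg h]
    by_cases hl : restr Set.subset_union_left r = restr Set.subset_union_left d
    · have h2 : restr Set.subset_union_right r ≠ restr Set.subset_union_right d :=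
        fun h2 => h ((eq_restr_union_iff r d).mpr ⟨hl, h2⟩)
      rw [show dirac (restr Set.subset_union_right d) (restr Set.subset_union_right r) = 0
        from if_neg h2, mul_zero]
    · rw [show dirac (restr Set.subset_union_left d) (restr Set.subset_union_left r) = 0
        from if_neg hl, zero_mul]

lemma poplus_comm' (K1 K2 : PKernel Val Var) : poplus K1 K2 = poplus K2 K1 := by
  refine PKernel.ext_of (Set.union_comm _ _) (Set.union_comm _ _) ?_
  intro d m
  exact mul_comm _ _

lemma poplus_assoc' (a b c : PKernel Val Var) :
    poplus (poplus a b) c = poplus a (poplus b c) := by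
  refine PKernel.ext_of (Set.union_assoc _ _ _) (Set.union_assoc _ _ _) ?_
  intro d m
  exact mul_assoc _ _ _

lemma poplus_unitK (R R' : Set Var) :
    poplus (unitK Val Var R) (unitK Val Var R') = unitK Val Var (R ∪ R') := by
  refine PKernel.ext_of rfl rfl ?_
  intro d m
  exact dirac_mul_dirac d m

lemma poplus_unitK_empty_right (K : PKernel Val Var) :
    poplus K (unitK Val Var ∅) = K := by
  refine (PKernel.ext_of (K1 := K) (Set.union_empty _).symm (Set.union_empty _).symm ?_).symm
  intro d m
  show K.f d m = K.f _ _ * dirac _ _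
  have hs : ∀ a b : Mem Val Var (∅ : Set Var), dirac a b = 1 :=
    fun a b => if_pos (Subsingleton.elim _ _)
  exact (mul_one _).symm.trans (congrArg (K.f d m * ·) (hs _ _).symm)

lemma poplus_unitK_empty_left (K : PKernel Val Var) :
    poplus (unitK Val Var ∅) K = K := by
  rw [poplus_comm', poplus_unitK_empty_right]

lemma podot_unitK_left (K : PKernel Val Var) : podot (unitK Val Var K.dom) K = K := by
  refine PKernel.ext_of rfl rfl ?_
  intro d m
  show (if h : (unitK Val Var K.dom).ran = K.dom then
      ∑' m' : Mem Val Var (unitK Val Var K.dom).ran,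
        (unitK Val Var K.dom).f d m' * K.f (restr (le_of_eq h.symm) m') m
    else 0) = K.f d m
  have hc : (unitK Val Var K.dom).ran = K.dom := rfl
  rw [dif_pos hc]
  refine Eq.trans (tsum_eq_single (show Mem Val Var (unitK Val Var K.dom).ran from d) ?_) ?_
  · intro b hb
    show dirac d b * _ = 0
    rw [show dirac d b = 0 from if_neg hb, zero_mul]
  · show dirac d d * K.f _ m = K.f d m
    rw [show dirac d d = 1 from if_pos rfl, one_mul]
    rfl

lemma podot_unitK_right (K : PKernel Val Var) : podot K (unitK Val Var K.ran) = K := by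
  refine PKernel.ext_of rfl rfl ?_
  intro d m
  show (if h : K.ran = (unitK Val Var K.ran).dom then
      ∑' m' : Mem Val Var K.ran, K.f d m' * (unitK Val Var K.ran).f (restr (le_of_eq h.symm) m') m
    else 0) = K.f d m
  have hc : K.ran = (unitK Val Var K.ran).dom := rfl
  rw [dif_pos hc]
  refine Eq.trans (tsum_eq_single (show Mem Val Var K.ran from m) ?_) ?_
  · intro b hb
    show K.f d b * dirac (restr (le_of_eq hc.symm) b) m = 0
    rw [show dirac (restr (le_of_eq hc.symm) b) m = 0 from if_neg (fun he => hb he.symm), mul_zero]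
  · show K.f d m * dirac (restr (le_of_eq hc.symm) (show Mem Val Var K.ran from m)) m = K.f d m
    rw [show dirac (restr (le_of_eq hc.symm) (show Mem Val Var K.ran from m)) m = 1
      from if_pos rfl, mul_one]

lemma podot_assoc' {a b c : PKernel Val Var} (h1 : a.ran = b.dom) (h2 : b.ran = c.dom) :
    podot (podot a b) c = podot a (podot b c) := by
  refine PKernel.ext_of rfl rfl ?_
  intro d m
  simp only [podot, dif_pos h1, dif_pos h2]
  refine (tsum_congr fun m2 => (ENNReal.tsum_mul_right).symm).trans ?_
  refine (ENNReal.tsum_comm).trans ?_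
  refine tsum_congr fun m1 => ?_
  rw [← ENNReal.tsum_mul_left]
  exact tsum_congr fun m2 => mul_assoc _ _ _

/-- The exchange equality `(a ⊙ b) ⊕ (c ⊙ d) = (a ⊕ c) ⊙ (b ⊕ d)`. -/
lemma exchange {a b c d : PKernel Val Var} (hA : InMD a) (hC : InMD c)
    (hab : a.ran = b.dom) (hcd : c.ran = d.dom)
    (hov : a.ran ∩ c.ran ⊆ a.dom ∩ c.dom) :
    poplus (podot a b) (podot c d) = podot (poplus a c) (poplus b d) := by
  have hre : a.ran ∪ c.ran = b.dom ∪ d.dom := by rw [hab, hcd]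
  refine PKernel.ext_of rfl rfl ?_
  intro d0 m
  simp only [poplus, podot, dif_pos hab, dif_pos hcd, dif_pos hre]
  refine Eq.trans (Eq.symm (tsum_union_mul
    (fun m1 => a.f (restr Set.subset_union_left d0) m1 *
      b.f (restr (le_of_eq hab.symm) m1) (restr Set.subset_union_left m))
    (fun m2 => c.f (restr Set.subset_union_right d0) m2 *
      d.f (restr (le_of_eq hcd.symm) m2) (restr Set.subset_union_right m))
    ?_)) (tsum_congr fun m' => ?_)
  · intro m1 m2 hF hG i hi1 hi2
    have hd1 : i ∈ a.dom := (hov ⟨hi1, hi2⟩).1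
    have hd2 : i ∈ c.dom := (hov ⟨hi1, hi2⟩).2
    have e1 := congrFun (hA.support _ _ (left_ne_zero_of_mul hF)) (⟨i, hd1⟩ : a.dom)
    have e2 := congrFun (hC.support _ _ (left_ne_zero_of_mul hG)) (⟨i, hd2⟩ : c.dom)
    exact e1.trans e2.symm
  · exact mul_mul_mul_comm _ _ _ _

lemma ne_zero_of_ite {c : Prop} [Decidable c] {x : ℝ≥0∞} (h : (if c then x else 0) ≠ 0) :
    x ≠ 0 := fun hx => h (by split <;> simp [hx])

lemma agree_union_split {A B C D : Set Var} (hCA : C ⊆ A) (hDB : D ⊆ B)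
    (m : Mem Val Var (A ∪ B)) (r : Mem Val Var (C ∪ D)) :
    Agree m r ↔
      Agree (restr Set.subset_union_left m) (restr Set.subset_union_left r) ∧
      Agree (restr Set.subset_union_right m) (restr Set.subset_union_right r) := by
  constructor
  · intro h
    constructor
    · intro i hi1 hi2
      exact h i (Set.subset_union_left hi1) (Set.subset_union_left hi2)
    · intro i hi1 hi2
      exact h i (Set.subset_union_right hi1) (Set.subset_union_right hi2)
  · rintro ⟨hl, hr⟩ i h1 h2
    rcases h2 with hc | hd
    · exact hl i (hCA hc) hc
    · exact hr i (hDB hd) hd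

lemma inMD_poplus {K1 K2 : PKernel Val Var} (h1 : InMD K1) (h2 : InMD K2)
    (hop : OplusDef K1 K2) : InMD (poplus K1 K2) := by
  refine ⟨Set.union_subset_union h1.1 h2.1, ?_, ?_⟩
  · intro d
    show (∑' m : Mem Val Var (K1.ran ∪ K2.ran), _) = 1
    refine Eq.trans (tsum_union_mul
      (fun m1 => K1.f (restr Set.subset_union_left d) m1)
      (fun m2 => K2.f (restr Set.subset_union_right d) m2) ?_) ?_
    · intro m1 m2 hF hG i hi1 hi2
      have hmem : i ∈ K1.dom ∩ K2.dom := (le_of_eq hop) ⟨hi1, hi2⟩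
      have e1 := congrFun (h1.support _ _ hF) (⟨i, hmem.1⟩ : K1.dom)
      have e2 := congrFun (h2.support _ _ hG) (⟨i, hmem.2⟩ : K2.dom)
      exact e1.trans e2.symm
    · rw [show (∑' m1, K1.f (restr Set.subset_union_left d) m1) = 1 from
          h1.2.1 (restr Set.subset_union_left d),
        show (∑' m2, K2.f (restr Set.subset_union_right d) m2) = 1 from
          h2.2.1 (restr Set.subset_union_right d), mul_one]
  · intro d
    funext r
    show (∑' m : Mem Val Var (K1.ran ∪ K2.ran), _) = _
    refine Eq.trans (tsum_congr (fun m => ?_)) (Eq.trans (tsum_union_mul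
      (fun m1 => if Agree m1 (restr Set.subset_union_left r) then
        K1.f (restr Set.subset_union_left d) m1 else 0)
      (fun m2 => if Agree m2 (restr Set.subset_union_right r) then
        K2.f (restr Set.subset_union_right d) m2 else 0) ?_) ?_)
    · show (if Agree m r then
          K1.f (restr Set.subset_union_left d) (restr Set.subset_union_left m) *
          K2.f (restr Set.subset_union_right d) (restr Set.subset_union_right m) else 0) = _
      by_cases hm : Agree m r
      · rw [if_pos hm,
          if_pos ((agree_union_split h1.1 h2.1 m r).mp hm).1,
          if_pos ((agree_union_split h1.1 h2.1 m r).mp hm).2]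
      · rw [if_neg hm]
        rcases not_and_or.mp (fun hc => hm ((agree_union_split h1.1 h2.1 m r).mpr hc)) with hh | hh
        · rw [if_neg hh, zero_mul]
        · rw [if_neg hh, mul_zero]
    · intro m1 m2 hF hG i hi1 hi2
      have hmem : i ∈ K1.dom ∩ K2.dom := (le_of_eq hop) ⟨hi1, hi2⟩
      have e1 := congrFun (h1.support _ _ (ne_zero_of_ite hF)) (⟨i, hmem.1⟩ : K1.dom)
      have e2 := congrFun (h2.support _ _ (ne_zero_of_ite hG)) (⟨i, hmem.2⟩ : K2.dom)
      exact e1.trans e2.symm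
    · rw [show (∑' m1, if Agree m1 (restr Set.subset_union_left r) then
            K1.f (restr Set.subset_union_left d) m1 else 0)
          = dirac (restr Set.subset_union_left d) (restr Set.subset_union_left r) from
          congrFun (h1.2.2 (restr Set.subset_union_left d)) (restr Set.subset_union_left r),
        show (∑' m2, if Agree m2 (restr Set.subset_union_right r) then
            K2.f (restr Set.subset_union_right d) m2 else 0)
          = dirac (restr Set.subset_union_right d) (restr Set.subset_union_right r) from
          congrFun (h2.2.2 (restr Set.subset_union_right d)) (restr Set.subset_union_right r)]
      exact dirac_mul_dirac d r

lemma inMD_podot {K1 K2 : PKernel Val Var} (h1 : InMD K1) (h2 : InMD K2)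
    (hd : K1.ran = K2.dom) : InMD (podot K1 K2) := by
  have hdd : K1.dom ⊆ K2.dom := hd ▸ h1.1
  refine ⟨subset_trans hdd h2.1, ?_, ?_⟩
  · intro d
    show (∑' m : Mem Val Var K2.ran, _) = 1
    simp only [podot, dif_pos hd]
    refine Eq.trans ENNReal.tsum_comm ?_
    refine Eq.trans (tsum_congr fun m' => ENNReal.tsum_mul_left) ?_
    refine Eq.trans (tsum_congr fun m' => ?_) (h1.2.1 d)
    rw [h2.2.1 (restr (le_of_eq hd.symm) m'), mul_one]
  · intro d
    funext r
    show (∑' m : Mem Val Var K2.ran, if Agree m r then _ else 0) = dirac d r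
    simp only [podot, dif_pos hd]
    have inner : ∀ n : Mem Val Var K2.dom,
        (∑' m : Mem Val Var K2.ran, if Agree m r then K2.f n m else 0)
          = if Agree n r then 1 else 0 := by
      intro n
      by_cases hn : Agree n r
      · rw [if_pos hn, ← h2.2.1 n]
        refine tsum_congr fun m => ?_
        by_cases hz : K2.f n m = 0
        · rw [hz, ite_self]
        · exact if_pos ((agree_restr_iff h2.1 hdd m r).mp ((h2.support n m hz).symm ▸ hn))
      · rw [if_neg hn]
        refine ENNReal.tsum_eq_zero.mpr fun m => ?_
        by_cases hz : K2.f n m = 0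
        · rw [hz, ite_self]
        · refine if_neg fun hm => hn ?_
          have := (agree_restr_iff h2.1 hdd m r).mpr hm
          rwa [h2.support n m hz] at this
    have step3 : ∀ m' : Mem Val Var K1.ran, (∑' m : Mem Val Var K2.ran,
        if Agree m r then K1.f d m' * K2.f (restr (le_of_eq hd.symm) m') m else 0)
        = if Agree m' r then K1.f d m' else 0 := by
      intro m'
      calc (∑' m : Mem Val Var K2.ran,
            if Agree m r then K1.f d m' * K2.f (restr (le_of_eq hd.symm) m') m else 0)
          = ∑' m : Mem Val Var K2.ran,
            K1.f d m' * (if Agree m r then K2.f (restr (le_of_eq hd.symm) m') m else 0) :=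
            tsum_congr fun m => by by_cases hm : Agree m r <;> simp [hm]
        _ = K1.f d m' * ∑' m : Mem Val Var K2.ran,
            (if Agree m r then K2.f (restr (le_of_eq hd.symm) m') m else 0) :=
            ENNReal.tsum_mul_left
        _ = K1.f d m' * (if Agree (restr (le_of_eq hd.symm) m') r then 1 else 0) := by
            rw [inner (restr (le_of_eq hd.symm) m')]
        _ = if Agree m' r then K1.f d m' else 0 := by
            by_cases hm : Agree m' r
            · exact (congrArg (K1.f d m' * ·)
                (if_pos ((agree_restr_iff (le_of_eq hd.symm) hdd m' r).mpr hm))).trans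
                ((mul_one _).trans (if_pos hm).symm)
            · exact (congrArg (K1.f d m' * ·)
                (if_neg (fun h => hm ((agree_restr_iff (le_of_eq hd.symm) hdd m' r).mp h)))).trans
                ((mul_zero _).trans (if_neg hm).symm)
    calc (∑' m : Mem Val Var K2.ran, if Agree m r then
          ∑' m' : Mem Val Var K1.ran, K1.f d m' * K2.f (restr (le_of_eq hd.symm) m') m else 0)
        = ∑' m : Mem Val Var K2.ran, ∑' m' : Mem Val Var K1.ran,
          (if Agree m r then K1.f d m' * K2.f (restr (le_of_eq hd.symm) m') m else 0) := by
          refine tsum_congr fun m => ?_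
          by_cases hm : Agree m r
          · rw [if_pos hm]; exact tsum_congr fun m' => (if_pos hm).symm
          · rw [if_neg hm]; symm; simp [hm]
      _ = ∑' m' : Mem Val Var K1.ran, ∑' m : Mem Val Var K2.ran,
          (if Agree m r then K1.f d m' * K2.f (restr (le_of_eq hd.symm) m') m else 0) :=
          ENNReal.tsum_comm
      _ = ∑' m' : Mem Val Var K1.ran, (if Agree m' r then K1.f d m' else 0) :=
          tsum_congr fun m' => step3 m'
      _ = dirac d r := congrFun (h1.2.2 d) r

end Infra2
section Main
open Classical
variable {Val Var : Type}

lemma poplus_poplus (a b c d : PKernel Val Var) :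
    poplus (poplus a b) (poplus c d) = poplus (poplus a c) (poplus b d) := by
  rw [poplus_assoc' a b (poplus c d), ← poplus_assoc' b c d, poplus_comm' b c,
    poplus_assoc' c b d, ← poplus_assoc' a c (poplus b d)]

lemma ple_refl (x : PKernel Val Var) : ple x x := by
  refine ⟨∅, unitK Val Var x.ran, unitK_inMD _, ?_, ?_, ?_⟩
  · show x.ran ∩ ∅ = x.dom ∩ ∅
    simp
  · show x.ran ∪ ∅ = x.ran
    simp
  · rw [poplus_unitK_empty_right, podot_unitK_right]

lemma ple_oplus_unitK {x : PKernel Val Var} (R : Set Var)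
    (hop : OplusDef x (unitK Val Var R)) : ple x (poplus x (unitK Val Var R)) :=
  ⟨R, unitK Val Var (x.ran ∪ R), unitK_inMD _, hop, rfl, (podot_unitK_right _).symm⟩

lemma ple_trans {x y z : PKernel Val Var} (hx : InMD x)
    (hxy : ple x y) (hyz : ple y z) : ple x z := by
  obtain ⟨R, h, hInh, hopR, hranh, hyeq⟩ := hxy
  obtain ⟨R', h', hInh', hopR', hranh', hzeq⟩ := hyz
  rw [hyeq] at hopR' hranh' hzeq
  have hopRx : x.ran ∩ R = x.dom ∩ R := hopR
  have hranhx : x.ran ∪ R = h.dom := hranh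
  have hYR : h.ran ∩ R' = (x.dom ∪ R) ∩ R' := hopR'
  have hD2 : h.ran ∪ R' = h'.dom := hranh'
  have key2 : (x.ran ∪ R) ∩ R' ⊆ (x.dom ∪ R) ∩ R' := by
    intro i hi
    exact (le_of_eq hYR) ⟨hInh.1 (hranhx ▸ hi.1), hi.2⟩
  have mono1 : (x.dom ∪ R) ∩ R' ⊆ (x.ran ∪ R) ∩ R' := by
    intro i hi
    exact ⟨hi.1.elim (fun hh => Or.inl (hx.1 hh)) Or.inr, hi.2⟩
  have hopHR' : OplusDef h (unitK Val Var R') := by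
    show h.ran ∩ R' = h.dom ∩ R'
    rw [← hranhx]
    exact hYR.trans (Set.Subset.antisymm key2 mono1).symm
  have hopRR : OplusDef x (unitK Val Var (R ∪ R')) := by
    show x.ran ∩ (R ∪ R') = x.dom ∩ (R ∪ R')
    refine Set.Subset.antisymm ?_ ?_
    · rintro i ⟨hir, hiRR⟩
      rcases hiRR with hiR | hiR'
      · have := (le_of_eq hopRx) ⟨hir, hiR⟩
        exact ⟨this.1, Or.inl hiR⟩
      · have h2 := key2 ⟨Or.inl hir, hiR'⟩
        rcases h2.1 with hd | hR
        · exact ⟨hd, Or.inr hiR'⟩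
        · exact ⟨((le_of_eq hopRx) ⟨hir, hR⟩).1, Or.inr hiR'⟩
    · rintro i ⟨hid, hiRR⟩
      exact ⟨hx.1 hid, hiRR⟩
  refine ⟨R ∪ R', podot (poplus h (unitK Val Var R')) h',
    inMD_podot (inMD_poplus hInh (unitK_inMD R') hopHR') hInh'
      (show h.ran ∪ R' = h'.dom from hD2), hopRR, ?_, ?_⟩
  · show x.ran ∪ (R ∪ R') = h.dom ∪ R'
    rw [← Set.union_assoc, hranhx]
  · rw [hzeq]
    have e1 : poplus (podot (poplus x (unitK Val Var R)) h) (unitK Val Var R')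
        = podot (poplus (poplus x (unitK Val Var R)) (unitK Val Var R'))
            (poplus h (unitK Val Var R')) := by
      conv_lhs => rw [show (unitK Val Var R') = podot (unitK Val Var R') (unitK Val Var R')
        from (podot_unitK_right _).symm]
      exact exchange (inMD_poplus hx (unitK_inMD R) hopR) (unitK_inMD R') hranh rfl key2
    rw [e1, podot_assoc'
        (show (poplus (poplus x (unitK Val Var R)) (unitK Val Var R')).ran
          = (poplus h (unitK Val Var R')).dom by
          show (x.ran ∪ R) ∪ R' = h.dom ∪ R'
          rw [hranhx])
        (show (poplus h (unitK Val Var R')).ran = h'.dom from hD2),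
      poplus_assoc', poplus_unitK]

lemma oplus_unit_coh {y e : PKernel Val Var} (hy : InMD y) (he : InMD e)
    (hop : OplusDef y e) : ple y (poplus y e) := by
  have h1 : y.ran ∩ e.dom = y.dom ∩ e.dom := by
    refine Set.Subset.antisymm ?_ ?_
    · intro i hi
      exact ⟨((le_of_eq hop) ⟨hi.1, he.1 hi.2⟩).1, hi.2⟩
    · intro i hi
      exact ⟨hy.1 hi.1, hi.2⟩
  have hopu : OplusDef (unitK Val Var y.ran) e := by
    show y.ran ∩ e.ran = y.ran ∩ e.dom
    rw [hop]
    exact h1.symm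
  refine ⟨e.dom, poplus (unitK Val Var y.ran) e, inMD_poplus (unitK_inMD _) he hopu,
    (show y.ran ∩ e.dom = y.dom ∩ e.dom from h1), rfl, ?_⟩
  conv_lhs => rw [← podot_unitK_right y, ← podot_unitK_left e]
  exact exchange hy (unitK_inMD _) rfl rfl (le_of_eq h1)

theorem MD_isDIBIFrame' (Val Var : Type) :
    IsDIBIFrame (fun x y : MD Val Var => ple x.1 y.1) mdOplus mdOdot
      (Set.univ : Set (MD Val Var)) := by
  constructor
  -- le_refl
  · intro x
    exact ple_refl x.1
  -- le_trans
  · intro x y z hxy hyz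
    exact ple_trans x.2 hxy hyz
  -- oplus_down
  · rintro x y z x' y' ⟨hopxy, hz2⟩ hx' hy'
    obtain ⟨R, h, hInh, hopR, hranh, hxeq⟩ := hx'
    obtain ⟨R', h', hInh', hopR', hranh', hyeq⟩ := hy'
    rw [hxeq, hyeq] at hopxy
    set a := x'.1 with ha
    set b := y'.1 with hb
    have hopRa : a.ran ∩ R = a.dom ∩ R := hopR
    have hopRb : b.ran ∩ R' = b.dom ∩ R' := hopR'
    have hranha : a.ran ∪ R = h.dom := hranh
    have hranhb : b.ran ∪ R' = h'.dom := hranh'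
    have hopxy' : h.ran ∩ h'.ran = (a.dom ∪ R) ∩ (b.dom ∪ R') := hopxy
    have key : (a.ran ∪ R) ∩ (b.ran ∪ R') ⊆ (a.dom ∪ R) ∩ (b.dom ∪ R') := by
      intro i hi
      exact (le_of_eq hopxy') ⟨hInh.1 (hranha ▸ hi.1), hInh'.1 (hranhb ▸ hi.2)⟩
    have hopab : OplusDef a b := by
      show a.ran ∩ b.ran = a.dom ∩ b.dom
      refine Set.Subset.antisymm ?_ (fun i hi => ⟨x'.2.1 hi.1, y'.2.1 hi.2⟩)
      intro i hi
      have h2 := key ⟨Or.inl hi.1, Or.inl hi.2⟩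
      constructor
      · rcases h2.1 with hh | hh
        · exact hh
        · exact ((le_of_eq hopRa) ⟨hi.1, hh⟩).1
      · rcases h2.2 with hh | hh
        · exact hh
        · exact ((le_of_eq hopRb) ⟨hi.2, hh⟩).1
    have hopu : OplusDef (poplus a b) (unitK Val Var (R ∪ R')) := by
      show (a.ran ∪ b.ran) ∩ (R ∪ R') = (a.dom ∪ b.dom) ∩ (R ∪ R')
      refine Set.Subset.antisymm ?_ ?_
      · rintro i ⟨hir, hiRR⟩
        refine ⟨?_, hiRR⟩
        rcases hir with hh | hh
        · rcases hiRR with hR | hR'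
          · exact Or.inl ((le_of_eq hopRa) ⟨hh, hR⟩).1
          · have h2 := key ⟨Or.inl hh, Or.inr hR'⟩
            rcases h2.1 with hd | hR
            · exact Or.inl hd
            · exact Or.inl ((le_of_eq hopRa) ⟨hh, hR⟩).1
        · rcases hiRR with hR | hR'
          · have h2 := key ⟨Or.inr hR, Or.inl hh⟩
            rcases h2.2 with hd | hRx
            · exact Or.inr hd
            · exact Or.inr ((le_of_eq hopRb) ⟨hh, hRx⟩).1
          · exact Or.inr ((le_of_eq hopRb) ⟨hh, hR'⟩).1
      · rintro i ⟨hid, hiRR⟩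
        refine ⟨?_, hiRR⟩
        exact hid.elim (fun hh => Or.inl (x'.2.1 hh)) (fun hh => Or.inr (y'.2.1 hh))
    have hoph : OplusDef h h' := by
      show h.ran ∩ h'.ran = h.dom ∩ h'.dom
      rw [← hranha, ← hranhb]
      refine hopxy'.trans (Set.Subset.antisymm ?_ key)
      rintro i ⟨hi1, hi2⟩
      exact ⟨hi1.elim (fun hh => Or.inl (x'.2.1 hh)) Or.inr,
        hi2.elim (fun hh => Or.inl (y'.2.1 hh)) Or.inr⟩
    refine ⟨⟨poplus a b, inMD_poplus x'.2 y'.2 hopab⟩,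
      ⟨R ∪ R', poplus h h', inMD_poplus hInh hInh' hoph, hopu, ?_, ?_⟩, ⟨hopab, rfl⟩⟩
    · show (a.ran ∪ b.ran) ∪ (R ∪ R') = h.dom ∪ h'.dom
      rw [← hranha, ← hranhb]
      ext i
      simp only [Set.mem_union]
      tauto
    · rw [hz2, hxeq, hyeq,
        exchange (inMD_poplus x'.2 (unitK_inMD R) hopR)
          (inMD_poplus y'.2 (unitK_inMD R') hopR') hranh hranh' key,
        poplus_poplus, poplus_unitK]
  -- odot_up
  · rintro x y z z' ⟨hxy, hz2⟩ hzz'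
    obtain ⟨R, h, hInh, hopR, hranh, hz'eq⟩ := hzz'
    rw [hz2] at hopR hranh hz'eq
    have hopRyx : y.1.ran ∩ R = x.1.dom ∩ R := hopR
    have hxR : x.1.ran ∩ R = x.1.dom ∩ R := by
      refine Set.Subset.antisymm ?_ (fun i hi => ⟨x.2.1 hi.1, hi.2⟩)
      intro i hi
      exact (le_of_eq hopRyx) ⟨y.2.1 (hxy ▸ hi.1), hi.2⟩
    have hyR : y.1.ran ∩ R = y.1.dom ∩ R := by
      refine Set.Subset.antisymm ?_ (fun i hi => ⟨y.2.1 hi.1, hi.2⟩)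
      intro i hi
      have h2 := (le_of_eq hopRyx) hi
      exact ⟨hxy ▸ x.2.1 h2.1, hi.2⟩
    have hdr : (poplus y.1 (unitK Val Var R)).ran = h.dom := hranh
    refine ⟨⟨poplus x.1 (unitK Val Var R), inMD_poplus x.2 (unitK_inMD R) hxR⟩,
      ⟨podot (poplus y.1 (unitK Val Var R)) h,
        inMD_podot (inMD_poplus y.2 (unitK_inMD R) hyR) hInh hdr⟩,
      ple_oplus_unitK R hxR, ⟨R, h, hInh, hyR, hdr, rfl⟩, ?_, ?_⟩
    · show x.1.ran ∪ R = y.1.dom ∪ R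
      rw [hxy]
    · have e1 : poplus (podot x.1 y.1) (unitK Val Var R)
          = podot (poplus x.1 (unitK Val Var R)) (poplus y.1 (unitK Val Var R)) := by
        conv_lhs => rw [show (unitK Val Var R) = podot (unitK Val Var R) (unitK Val Var R)
          from (podot_unitK_right _).symm]
        exact exchange x.2 (unitK_inMD R) hxy rfl (le_of_eq hxR)
      rw [hz'eq, e1, podot_assoc'
        (show (poplus x.1 (unitK Val Var R)).ran = (poplus y.1 (unitK Val Var R)).dom by
          show x.1.ran ∪ R = y.1.dom ∪ R
          rw [hxy])
        hdr]
  -- oplus_comm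
  · rintro x y z ⟨hop, hz⟩
    refine ⟨?_, by rw [hz, poplus_comm']⟩
    show y.1.ran ∩ x.1.ran = y.1.dom ∩ x.1.dom
    rw [Set.inter_comm, hop, Set.inter_comm]
  -- oplus_assoc
  · rintro x y z t w ⟨hop_w, hw2⟩ ⟨hop_t, ht2⟩
    rw [ht2] at hop_w hw2
    have hw' : (x.1.ran ∪ y.1.ran) ∩ z.1.ran = (x.1.dom ∪ y.1.dom) ∩ z.1.dom := hop_w
    have hyz : OplusDef y.1 z.1 := by
      show y.1.ran ∩ z.1.ran = y.1.dom ∩ z.1.dom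
      refine Set.Subset.antisymm ?_ (fun i hi => ⟨y.2.1 hi.1, z.2.1 hi.2⟩)
      intro i hi
      have h2 := (le_of_eq hw') ⟨Or.inr hi.1, hi.2⟩
      rcases h2.1 with hxd | hyd
      · exact ⟨((le_of_eq hop_t) ⟨x.2.1 hxd, hi.1⟩).2, h2.2⟩
      · exact ⟨hyd, h2.2⟩
    have hxs : OplusDef x.1 (poplus y.1 z.1) := by
      show x.1.ran ∩ (y.1.ran ∪ z.1.ran) = x.1.dom ∩ (y.1.dom ∪ z.1.dom)
      refine Set.Subset.antisymm ?_ ?_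
      · rintro i ⟨hxr, hyzr⟩
        rcases hyzr with hyr | hzr
        · have h3 := (le_of_eq hop_t) ⟨hxr, hyr⟩
          exact ⟨h3.1, Or.inl h3.2⟩
        · have h2 := (le_of_eq hw') ⟨Or.inl hxr, hzr⟩
          rcases h2.1 with hxd | hyd
          · exact ⟨hxd, Or.inr h2.2⟩
          · have h3 := (le_of_eq hop_t) ⟨hxr, y.2.1 hyd⟩
            exact ⟨h3.1, Or.inr h2.2⟩
      · rintro i ⟨hxd, hyzd⟩
        refine ⟨x.2.1 hxd, ?_⟩
        exact hyzd.elim (fun hh => Or.inl (y.2.1 hh)) (fun hh => Or.inr (z.2.1 hh))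
    refine ⟨⟨poplus y.1 z.1, inMD_poplus y.2 z.2 hyz⟩, ⟨hyz, rfl⟩,
      hxs, by rw [hw2, poplus_assoc']⟩
  -- oplus_unit_exists
  · intro x
    refine ⟨⟨unitK Val Var ∅, unitK_inMD ∅⟩, Set.mem_univ _, ?_, (poplus_unitK_empty_left x.1).symm⟩
    show (∅ : Set Var) ∩ x.1.ran = (∅ : Set Var) ∩ x.1.dom
    simp
  -- oplus_unit_coherence
  · rintro e x y _ ⟨hop, hx2⟩
    rw [hx2]
    exact oplus_unit_coh y.2 e.2 hop
  -- odot_assoc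
  · intro x y z w
    constructor
    · rintro ⟨t, ⟨htw1, htw2⟩, ⟨ht1, ht2⟩⟩
      rw [ht2] at htw1 htw2
      have hyz : y.1.ran = z.1.dom := htw1
      refine ⟨⟨podot y.1 z.1, inMD_podot y.2 z.2 hyz⟩, ⟨hyz, rfl⟩, ht1, ?_⟩
      rw [htw2, podot_assoc' ht1 hyz]
    · rintro ⟨s, ⟨hs1, hs2⟩, ⟨hw1, hw2⟩⟩
      rw [hs2] at hw1 hw2
      have hxy : x.1.ran = y.1.dom := hw1
      refine ⟨⟨podot x.1 y.1, inMD_podot x.2 y.2 hxy⟩, ⟨?_, ?_⟩, hxy, rfl⟩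
      · show y.1.ran = z.1.dom
        exact hs1
      · rw [hw2, podot_assoc' hxy hs1]
  -- odot_unit_exists_left
  · intro x
    exact ⟨⟨unitK Val Var x.1.dom, unitK_inMD _⟩, Set.mem_univ _, rfl,
      (podot_unitK_left x.1).symm⟩
  -- odot_unit_exists_right
  · intro x
    exact ⟨⟨unitK Val Var x.1.ran, unitK_inMD _⟩, Set.mem_univ _, rfl,
      (podot_unitK_right x.1).symm⟩
  -- odot_coherence_right
  · rintro e x y _ ⟨hd, hx2⟩
    refine ⟨∅, e.1, e.2, ?_, ?_, ?_⟩
    · show y.1.ran ∩ ∅ = y.1.dom ∩ ∅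
      simp
    · show y.1.ran ∪ ∅ = e.1.dom
      rw [Set.union_empty]
      exact hd
    · rw [poplus_unitK_empty_right]
      exact hx2
  -- unit_closure
  · intro e e' _ _
    exact Set.mem_univ _
  -- rev_exchange
  · rintro x y z y1 y2 z1 z2 ⟨hopx, hx2⟩ ⟨hy1, hy2'⟩ ⟨hz1, hz2'⟩
    rw [hy2', hz2'] at hopx hx2
    have hop' : y2.1.ran ∩ z2.1.ran = y1.1.dom ∩ z1.1.dom := hopx
    have hov : y1.1.ran ∩ z1.1.ran ⊆ y1.1.dom ∩ z1.1.dom := by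
      intro i hi
      exact (le_of_eq hop') ⟨y2.2.1 (hy1 ▸ hi.1), z2.2.1 (hz1 ▸ hi.2)⟩
    have hopA : OplusDef y1.1 z1.1 :=
      Set.Subset.antisymm hov (fun i hi => ⟨y1.2.1 hi.1, z1.2.1 hi.2⟩)
    have hopB : OplusDef y2.1 z2.1 := by
      show y2.1.ran ∩ z2.1.ran = y2.1.dom ∩ z2.1.dom
      refine Set.Subset.antisymm ?_ (fun i hi => ⟨y2.2.1 hi.1, z2.2.1 hi.2⟩)
      intro i hi
      have h2 := (le_of_eq hop') hi
      exact ⟨hy1 ▸ y1.2.1 h2.1, hz1 ▸ z1.2.1 h2.2⟩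
    refine ⟨⟨poplus y1.1 z1.1, inMD_poplus y1.2 z1.2 hopA⟩,
      ⟨poplus y2.1 z2.1, inMD_poplus y2.2 z2.2 hopB⟩, ⟨hopA, rfl⟩, ⟨hopB, rfl⟩, ?_, ?_⟩
    · show y1.1.ran ∪ z1.1.ran = y2.1.dom ∪ z2.1.dom
      rw [hy1, hz1]
    · rw [hx2]
      exact exchange y1.2 z1.2 hy1 hz1 hov

end Main

/-- **The probabilistic model is a DIBI frame.** The structure
`(M^D, ⊑, ⊕, ⊙, M^D)` of input-preserving Markov kernels, with parallel and
sequential composition and with every state a unit, satisfies all twelve DIBI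
frame conditions (in particular, `⊑` is a preorder on `M^D`). -/
theorem MD_isDIBIFrame (Val Var : Type) [Fintype Val] [Fintype Var] :
    IsDIBIFrame (fun x y : MD Val Var => ple x.1 y.1) mdOplus mdOdot
      (Set.univ : Set (MD Val Var)) :=
  MD_isDIBIFrame' Val Var
end
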